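/- arXiv:1907.07712 — 7 statements merged into one kernel-verified Lean document; each statement's English description precedes it below -/
import Mathlib

section
/- Let L be a supersolvable line arrangement over any field with a modular point p of multiplicity m. If q is a crossing point of multiplicity n ≥ m, then q is also modular. -/
open Projectivization

/-- The projective plane over `K`, with points (and, dually, lines) given by
projectivizing `K^3`. -/
abbrev PP (K : Type*) [Field K] := Projectivization K (Fin 3 → K)

/-- Incidence: the point `p` lies on the line `l` (given by dual coordinates):
the dot product of (any) homogeneous coordinates vanishes. -/
def incid {K : Type*} [Field K] (p l : PP K) : Prop :=
  dotProduct p.rep l.rep = 0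

/-- The multiplicity of a point `p` with respect to a line arrangement `L`:
the number of lines of `L` passing through `p`. -/
noncomputable def mult {K : Type*} [Field K] (L : Set (PP K)) (p : PP K) : ℕ :=
  {l ∈ L | incid p l}.ncard

/-- `p` is a crossing point of the arrangement `L`. -/
def crossing {K : Type*} [Field K] (L : Set (PP K)) (p : PP K) : Prop :=
  2 ≤ mult L p

/-- `p` is a modular point of `L`: a crossing point such that for every other
crossing point `q`, some line of `L` passes through both `p` and `q`. -/
def modular {K : Type*} [Field K] (L : Set (PP K)) (p : PP K) : Prop :=
  crossing L p ∧ ∀ q, crossing L q → q ≠ p → ∃ l ∈ L, incid p l ∧ incid q l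

/-- `t_k`: the number of crossing points of `L` of multiplicity exactly `k`. -/
noncomputable def tk {K : Type*} [Field K] (L : Set (PP K)) (k : ℕ) : ℕ :=
  {p | mult L p = k}.ncard

/-- A pencil: all lines pass through one common point. -/
def isPencil {K : Type*} [Field K] (L : Set (PP K)) : Prop :=
  ∃ p, ∀ l ∈ L, incid p l

/-- A near pencil: an arrangement of `s ≥ 3` lines, exactly `s - 1` of which
are concurrent. -/
def isNearPencil {K : Type*} [Field K] (L : Set (PP K)) : Prop :=
  3 ≤ L.ncard ∧ ∃ p, {l ∈ L | incid p l}.ncard + 1 = L.ncard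

open Matrix in
/-- vector triple product -/
lemma my_triple_product {K : Type*} [Field K] (u a b : Fin 3 → K) :
    u ⨯₃ (a ⨯₃ b) = (u ⬝ᵥ b) • a - (u ⬝ᵥ a) • b := by
  funext i
  fin_cases i <;>
    simp [cross_apply, dotProduct, Fin.sum_univ_three] <;> ring

open Matrix in
lemma my_cross_dep {K : Type*} [Field K] {v w : Fin 3 → K} (hv : v ≠ 0)
    (h : v ⨯₃ w = 0) : ∃ c : K, c • v = w := by
  by_contra hc
  push_neg at hc
  exact (crossProduct_ne_zero_iff_linearIndependent.mpr
    ((LinearIndependent.pair_iff' hv).mpr hc)) h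

open Matrix in
/-- any vector orthogonal to two independent vectors is parallel to the cross product -/
lemma my_ortho_par {K : Type*} [Field K] {a b u : Fin 3 → K} (hab : a ⨯₃ b ≠ 0)
    (hua : u ⬝ᵥ a = 0) (hub : u ⬝ᵥ b = 0) : ∃ c : K, c • (a ⨯₃ b) = u := by
  apply my_cross_dep hab
  have h0 : u ⨯₃ (a ⨯₃ b) = 0 := by
    rw [my_triple_product, hua, hub]
    simp
  rw [← cross_anticomm, h0, neg_zero]

open Matrix in
lemma my_cross_rep_zero_iff {K : Type*} [Field K] (x y : PP K) :
    x.rep ⨯₃ y.rep = 0 ↔ x = y := by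
  constructor
  · intro h
    obtain ⟨c, hc⟩ := my_cross_dep x.rep_nonzero h
    have : Projectivization.mk K y.rep y.rep_nonzero =
        Projectivization.mk K x.rep x.rep_nonzero :=
      (mk_eq_mk_iff' K _ _ _ _).mpr ⟨c, hc⟩
    rw [mk_rep, mk_rep] at this
    exact this.symm
  · rintro rfl
    exact cross_self _

lemma my_eq_of_smul_rep {K : Type*} [Field K] {x y : PP K} {a : K}
    (h : a • x.rep = y.rep) : x = y := by
  have : Projectivization.mk K y.rep y.rep_nonzero =
      Projectivization.mk K x.rep x.rep_nonzero :=
    (mk_eq_mk_iff' K _ _ _ _).mpr ⟨a, h⟩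
  rw [mk_rep, mk_rep] at this
  exact this.symm

lemma my_incid_comm {K : Type*} [Field K] {p l : PP K} (h : incid p l) : incid l p := by
  unfold incid at *
  rwa [dotProduct_comm]

open Matrix in
lemma my_incid_mk {K : Type*} [Field K] (v : Fin 3 → K) (hv : v ≠ 0) (l : PP K) :
    incid (Projectivization.mk K v hv) l ↔ v ⬝ᵥ l.rep = 0 := by
  obtain ⟨a, ha⟩ := exists_smul_eq_mk_rep K v hv
  unfold incid
  rw [← ha, Units.smul_def, smul_dotProduct, smul_eq_mul,
    mul_eq_zero, or_iff_right (Units.ne_zero a)]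

open Matrix in
/-- two points lie on at most one line -/
lemma my_line_unique {K : Type*} [Field K] {x y l l' : PP K} (hxy : x ≠ y)
    (h1 : incid x l) (h2 : incid y l) (h3 : incid x l') (h4 : incid y l') : l = l' := by
  have hcr : x.rep ⨯₃ y.rep ≠ 0 := fun h => hxy ((my_cross_rep_zero_iff x y).mp h)
  obtain ⟨c, hc⟩ := my_ortho_par hcr (my_incid_comm h1) (my_incid_comm h2)
  obtain ⟨d, hd⟩ := my_ortho_par hcr (my_incid_comm h3) (my_incid_comm h4)
  have hc0 : c ≠ 0 := by
    rintro rfl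
    rw [zero_smul] at hc
    exact l.rep_nonzero hc.symm
  refine my_eq_of_smul_rep (a := d * c⁻¹) ?_
  rw [← hc, ← hd, smul_smul]
  congr 1
  field_simp

open Matrix in
/-- two distinct lines meet -/
lemma my_exists_meet {K : Type*} [Field K] {l l' : PP K} (h : l ≠ l') :
    ∃ x : PP K, incid x l ∧ incid x l' := by
  have hcr : l.rep ⨯₃ l'.rep ≠ 0 := fun hc => h ((my_cross_rep_zero_iff l l').mp hc)
  refine ⟨Projectivization.mk K _ hcr, ?_, ?_⟩
  · rw [my_incid_mk, dotProduct_comm]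
    exact dot_self_cross _ _
  · rw [my_incid_mk, dotProduct_comm]
    exact dot_cross_self _ _

lemma my_two_le_mult {K : Type*} [Field K] {L : Set (PP K)} (hfin : L.Finite)
    {x l l' : PP K} (hl : l ∈ L) (hl' : l' ∈ L) (hne : l ≠ l')
    (h1 : incid x l) (h2 : incid x l') : 2 ≤ mult L x := by
  have : 1 < ({m ∈ L | incid x m}).ncard :=
    (Set.one_lt_ncard (hfin.subset (Set.sep_subset _ _))).mpr
      ⟨l, ⟨hl, h1⟩, l', ⟨hl', h2⟩, hne⟩
  exact this

/-- if p is modular of multiplicity m and q is a crossing point of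
multiplicity n ≥ m, then q is modular. -/
theorem crossing_of_ge_mult_is_modular {K : Type*} [Field K] (L : Set (PP K))
    (hfin : L.Finite) (p q : PP K) (m n : ℕ)
    (hp : modular L p) (hpm : mult L p = m)
    (hq : crossing L q) (hqn : mult L q = n) (hmn : m ≤ n) :
    modular L q := by
  refine ⟨hq, ?_⟩
  intro r hr hrq
  by_cases hqp : q = p
  · obtain ⟨l, hlL, hpl, hrl⟩ := hp.2 r hr (hqp ▸ hrq)
    exact ⟨l, hlL, hqp ▸ hpl, hrl⟩
  by_cases hrp : r = p
  · obtain ⟨l, hlL, hpl, hql⟩ := hp.2 q hq hqp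
    exact ⟨l, hlL, hql, hrp ▸ hpl⟩
  by_contra hno
  push_neg at hno
  -- the line through p and r
  obtain ⟨ℓ, hℓL, hpℓ, hrℓ⟩ := hp.2 r hr hrp
  -- a second line through r
  have hr2 : 1 < ({l ∈ L | incid r l}).ncard := hr
  obtain ⟨l1, hl1, l2, hl2, hl12⟩ :=
    (Set.one_lt_ncard (hfin.subset (Set.sep_subset _ _))).mp hr2
  obtain ⟨g, hgL, hrg, hgℓ⟩ : ∃ g, g ∈ L ∧ incid r g ∧ g ≠ ℓ := by
    by_cases h1 : l1 = ℓ
    · exact ⟨l2, hl2.1, hl2.2, fun h => hl12 (h1.trans h.symm)⟩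
    · exact ⟨l1, hl1.1, hl1.2, h1⟩
  have hpg : ¬ incid p g := by
    intro hpg
    exact hgℓ (my_line_unique hrp hrg hpg hrℓ hpℓ)
  have hqg : ¬ incid q g := fun hqg => hno g hgL hqg hrg
  -- S: crossing points on g
  set S : Set (PP K) := {x | crossing L x ∧ incid x g} with hS
  -- Claim A : S.ncard ≤ m, via injection into lines through p
  have key : ∀ x, ∃ l, x ∈ S → l ∈ L ∧ incid p l ∧ incid x l := by
    intro x
    by_cases hx : x ∈ S
    · have hxp : x ≠ p := fun h => hpg (h ▸ hx.2)
      obtain ⟨l, hl⟩ := hp.2 x hx.1 hxp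
      exact ⟨l, fun _ => ⟨hl.1, hl.2.1, hl.2.2⟩⟩
    · exact ⟨p, fun h => absurd h hx⟩
  choose f hf using key
  have hmaps : ∀ x ∈ S, f x ∈ {l ∈ L | incid p l} := fun x hx =>
    ⟨(hf x hx).1, (hf x hx).2.1⟩
  have hinj : Set.InjOn f S := by
    intro x hx y hy hxy
    by_contra hne
    have h1 : incid x (f x) := (hf x hx).2.2
    have h2 : incid y (f x) := hxy ▸ (hf y hy).2.2
    have : f x = g := my_line_unique hne h1 h2 hx.2 hy.2
    exact hpg (this ▸ (hf x hx).2.1)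
  have htfin : ({l ∈ L | incid p l}).Finite := hfin.subset (Set.sep_subset _ _)
  have hA : S.ncard ≤ m := by
    rw [← hpm]
    exact Set.ncard_le_ncard_of_injOn f hmaps hinj htfin
  have hSfin : S.Finite :=
    Set.Finite.of_finite_image (htfin.subset (Set.image_subset_iff.mpr hmaps)) hinj
  -- Claim B : n + 1 ≤ S.ncard
  set Hq : Set (PP K) := {l ∈ L | incid q l} with hHq
  have hHqfin : Hq.Finite := hfin.subset (Set.sep_subset _ _)
  have key2 : ∀ h, ∃ x, h ∈ Hq → incid x h ∧ incid x g ∧ x ∈ S := by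
    intro h
    by_cases hh : h ∈ Hq
    · have hhg : h ≠ g := fun he => hqg (he ▸ hh.2)
      obtain ⟨x, hx1, hx2⟩ := my_exists_meet hhg
      exact ⟨x, fun _ =>
        ⟨hx1, hx2, ⟨my_two_le_mult hfin hh.1 hgL hhg hx1 hx2, hx2⟩⟩⟩
    · exact ⟨q, fun h' => absurd h' hh⟩
  choose φ hφ using key2
  have himgS : φ '' Hq ⊆ S := by
    rintro _ ⟨h, hh, rfl⟩
    exact (hφ h hh).2.2
  have hrS : r ∈ S := ⟨hr, hrg⟩
  have hrnot : r ∉ φ '' Hq := by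
    rintro ⟨h, hh, hφh⟩
    exact hno h hh.1 hh.2 (hφh ▸ (hφ h hh).1)
  have hφinj : Set.InjOn φ Hq := by
    intro h1 hh1 h2 hh2 he
    by_contra hne
    have hx1 : incid (φ h1) h1 := (hφ h1 hh1).1
    have hx2 : incid (φ h1) h2 := he ▸ (hφ h2 hh2).1
    have hqx : q ≠ φ h1 := fun hqx => hqg (hqx ▸ (hφ h1 hh1).2.1)
    exact hne (my_line_unique hqx hh1.2 hx1 hh2.2 hx2)
  have hsub : insert r (φ '' Hq) ⊆ S := Set.insert_subset hrS himgS
  have himgfin : (φ '' Hq).Finite := hHqfin.image φ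
  have hcard : (insert r (φ '' Hq)).ncard = n + 1 := by
    rw [Set.ncard_insert_of_notMem hrnot himgfin, Set.ncard_image_of_injOn hφinj]
    rw [hHq, ← hqn]
    rfl
  have hB : n + 1 ≤ S.ncard := hcard ▸ Set.ncard_le_ncard hsub hSfin
  omega
end

section
/- Let L be a supersolvable line arrangement (over any field) with a modular point p of multiplicity m, and suppose q is a crossing point of multiplicity n > m. Then L consists exactly of the m lines through p and the n lines through q (so m + n − 1 lines in total). -/
open Projectivization

section
open Matrix Module
variable {K : Type*} [Field K]

lemma PPaux.exists_orthog (v w : Fin 3 → K) :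
    ∃ z : Fin 3 → K, z ≠ 0 ∧ v ⬝ᵥ z = 0 ∧ w ⬝ᵥ z = 0 := by
  set M : Matrix (Fin 2) (Fin 3) K := Matrix.of ![v, w] with hM
  have h1 := M.mulVecLin.finrank_range_add_finrank_ker
  have h2 : finrank K (LinearMap.range M.mulVecLin) ≤ 2 :=
    le_trans (Submodule.finrank_le _) (by simp)
  have h3 : finrank K (Fin 3 → K) = 3 := by simp
  have hker : 0 < finrank K (LinearMap.ker M.mulVecLin) := by omega
  have hne : LinearMap.ker M.mulVecLin ≠ ⊥ := by
    intro h
    rw [h] at hker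
    simp at hker
  obtain ⟨z, hz, hz0⟩ := Submodule.exists_mem_ne_zero_of_ne_bot hne
  refine ⟨z, hz0, ?_, ?_⟩
  · have := congrFun (LinearMap.mem_ker.1 hz) 0
    simpa [M, Matrix.mulVecLin, Matrix.mulVec] using this
  · have := congrFun (LinearMap.mem_ker.1 hz) 1
    simpa [M, Matrix.mulVecLin, Matrix.mulVec] using this

lemma PPaux.dep_of_orthog {v w : Fin 3 → K} (hvw : LinearIndependent K ![v, w])
    {z1 z2 : Fin 3 → K} (hz1 : z1 ≠ 0) (hz2 : z2 ≠ 0)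
    (h1 : v ⬝ᵥ z1 = 0) (h2 : w ⬝ᵥ z1 = 0) (h3 : v ⬝ᵥ z2 = 0) (h4 : w ⬝ᵥ z2 = 0) :
    ∃ c : K, c ≠ 0 ∧ z2 = c • z1 := by
  set M : Matrix (Fin 2) (Fin 3) K := Matrix.of ![v, w] with hM
  have hrank : M.rank = 2 := by
    have : LinearIndependent K M := hvw
    simpa using this.rank_matrix
  have h1' := M.mulVecLin.finrank_range_add_finrank_ker
  have h3' : finrank K (Fin 3 → K) = 3 := by simp
  rw [show finrank K ↥(LinearMap.range M.mulVecLin) = M.rank from rfl, hrank, h3'] at h1'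
  have hker : finrank K (LinearMap.ker M.mulVecLin) = 1 := by omega
  have hmem : ∀ z : Fin 3 → K, v ⬝ᵥ z = 0 → w ⬝ᵥ z = 0 → z ∈ LinearMap.ker M.mulVecLin := by
    intro z ha hb
    rw [LinearMap.mem_ker]
    ext i
    fin_cases i <;> simp [M, Matrix.mulVecLin, Matrix.mulVec, ha, hb]
  by_contra hc
  push_neg at hc
  have hli : LinearIndependent K ![z1, z2] := by
    rw [LinearIndependent.pair_iff]
    intro s t hst
    rcases eq_or_ne t 0 with rfl | ht
    · rcases eq_or_ne s 0 with rfl | hs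
      · exact ⟨rfl, rfl⟩
      · exfalso; apply hz1
        have : s • z1 = 0 := by simpa using hst
        simpa [hs] using (smul_eq_zero.1 this)
    · exfalso
      have hz2' : z2 = (-s/t) • z1 := by
        have : t • z2 = -s • z1 := by
          rw [neg_smul]; exact eq_neg_of_add_eq_zero_right hst
        have := congrArg (fun u => t⁻¹ • u) this
        simpa [smul_smul, ht, div_eq_inv_mul, mul_comm] using this
      have hns : (-s/t) ≠ 0 := by
        intro h0
        apply hz2
        rw [hz2', h0, zero_smul]
      exact hc _ hns hz2'
  have hspan : Submodule.span K (Set.range ![z1, z2]) ≤ LinearMap.ker M.mulVecLin := by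
    rw [Submodule.span_le]
    rintro x ⟨i, rfl⟩
    fin_cases i
    · exact hmem z1 h1 h2
    · exact hmem z2 h3 h4
  have := Submodule.finrank_mono hspan
  rw [finrank_span_eq_card hli, hker] at this
  simp at this

lemma PPaux.eq_of_rep_smul {a b : PP K} {c : K} (hc : c ≠ 0) (h : a.rep = c • b.rep) : a = b := by
  have : Projectivization.mk K a.rep a.rep_nonzero = Projectivization.mk K b.rep b.rep_nonzero :=
    (Projectivization.mk_eq_mk_iff K _ _ _ _).2 ⟨Units.mk0 c hc, h.symm⟩
  simpa [Projectivization.mk_rep] using this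

lemma PPaux.rep_indep {p q : PP K} (h : p ≠ q) : LinearIndependent K ![p.rep, q.rep] := by
  rw [LinearIndependent.pair_iff]
  intro s t hst
  by_contra hcon
  have hs : s ≠ 0 ∨ t ≠ 0 := by tauto
  rcases eq_or_ne s 0 with rfl | hs'
  · have ht : t ≠ 0 := by tauto
    apply q.rep_nonzero
    have : t • q.rep = 0 := by simpa using hst
    simpa [ht] using smul_eq_zero.1 this
  · rcases eq_or_ne t 0 with rfl | ht'
    · apply p.rep_nonzero
      have : s • p.rep = 0 := by simpa using hst
      simpa [hs'] using smul_eq_zero.1 this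
    · apply h
      refine PPaux.eq_of_rep_smul (c := -t/s) (by simp [ht', hs']) ?_
      have : s • p.rep = -t • q.rep := by
        rw [neg_smul]; exact eq_neg_of_add_eq_zero_left hst
      have := congrArg (fun u => s⁻¹ • u) this
      simpa [smul_smul, hs', div_eq_inv_mul, mul_comm] using this

lemma PPaux.incid_mk {z : Fin 3 → K} (hz : z ≠ 0) (l : PP K) :
    incid (Projectivization.mk K z hz) l ↔ z ⬝ᵥ l.rep = 0 := by
  obtain ⟨a, ha⟩ := Projectivization.exists_smul_eq_mk_rep K z hz
  unfold incid
  rw [← ha, smul_dotProduct]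
  exact smul_eq_zero_iff_eq a

/-- two distinct points lie on at most one line -/
lemma PPaux.line_unique {a b : PP K} (hab : a ≠ b) {l1 l2 : PP K}
    (h1a : incid a l1) (h1b : incid b l1) (h2a : incid a l2) (h2b : incid b l2) : l1 = l2 := by
  obtain ⟨c, hc, hrep⟩ := PPaux.dep_of_orthog (PPaux.rep_indep hab)
    l1.rep_nonzero l2.rep_nonzero h1a h1b h2a h2b
  exact (PPaux.eq_of_rep_smul hc hrep).symm

/-- two lines meet in a point -/
lemma PPaux.exists_point (l1 l2 : PP K) : ∃ x : PP K, incid x l1 ∧ incid x l2 := by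
  obtain ⟨z, hz, h1, h2⟩ := PPaux.exists_orthog l1.rep l2.rep
  refine ⟨Projectivization.mk K z hz, ?_, ?_⟩ <;>
    rw [PPaux.incid_mk] <;> rwa [dotProduct_comm]

end

/-- if p is modular of multiplicity m and q is a crossing point of
multiplicity n > m, then L consists exactly of the m lines through p together
with the n lines through q, so m + n - 1 lines in all. -/


theorem modular_with_bigger_crossing {K : Type*} [Field K] (L : Set (PP K))
    (hfin : L.Finite) (p q : PP K) (m n : ℕ)
    (hp : modular L p) (hpm : mult L p = m)
    (hq : crossing L q) (hqn : mult L q = n) (hmn : m < n) :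
    (∀ l ∈ L, incid p l ∨ incid q l) ∧ L.ncard = m + n - 1 := by
  classical
  have hpq : p ≠ q := by
    rintro rfl
    rw [hpm] at hqn
    omega
  set Sp := {l ∈ L | incid p l} with hSp
  set Sq := {l ∈ L | incid q l} with hSq
  have hSpfin : Sp.Finite := hfin.subset (fun l hl => hl.1)
  have hSqfin : Sq.Finite := hfin.subset (fun l hl => hl.1)
  have hSpcard : Sp.ncard = m := hpm
  have hSqcard : Sq.ncard = n := hqn
  have main : ∀ l ∈ L, incid p l ∨ incid q l := by
    intro l hl
    by_contra hcon
    push_neg at hcon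
    obtain ⟨hpl, hql⟩ := hcon
    have key : ∀ l' ∈ Sq, ∃ l'' ∈ Sp, ∃ x, incid x l ∧ incid x l' ∧ incid x l'' := by
      intro l' hl'
      obtain ⟨x, hx1, hx2⟩ := PPaux.exists_point l l'
      have hxp : x ≠ p := fun h => hpl (h ▸ hx1)
      have hll' : l ≠ l' := fun h => hql (h ▸ hl'.2)
      have hcross : crossing L x := by
        have hsub : ({l, l'} : Set (PP K)) ⊆ {g ∈ L | incid x g} := by
          rintro g (rfl | rfl)
          exacts [⟨hl, hx1⟩, ⟨hl'.1, hx2⟩]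
        have h2 := Set.ncard_le_ncard hsub (hfin.subset (fun g hg => hg.1))
        rw [Set.ncard_pair hll'] at h2
        exact h2
      obtain ⟨l'', hl''L, hl''p, hl''x⟩ := hp.2 x hcross hxp
      exact ⟨l'', ⟨hl''L, hl''p⟩, x, hx1, hx2, hl''x⟩
    choose g hgSp xx hA hB hC using key
    set F : PP K → PP K := fun l' => if h : l' ∈ Sq then g l' h else l' with hF
    have hmaps : ∀ a ∈ Sq, F a ∈ Sp := by
      intro a ha
      simp only [hF, dif_pos ha]
      exact hgSp a ha
    have hinj : Set.InjOn F Sq := by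
      intro l1 h1 l2 h2 heq
      simp only [hF, dif_pos h1, dif_pos h2] at heq
      rcases eq_or_ne (xx l1 h1) (xx l2 h2) with hx12 | hx12
      · have hq1 : q ≠ xx l1 h1 := fun h => hql (h ▸ hA l1 h1)
        exact PPaux.line_unique hq1 h1.2 (hB l1 h1) h2.2 (hx12 ▸ hB l2 h2)
      · exfalso
        have : g l1 h1 = l :=
          PPaux.line_unique hx12 (hC l1 h1) (heq ▸ hC l2 h2) (hA l1 h1) (hA l2 h2)
        exact hpl (this ▸ (hgSp l1 h1).2)
    have hle : Sq.ncard ≤ Sp.ncard := Set.ncard_le_ncard_of_injOn F hmaps hinj hSpfin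
    rw [hSpcard, hSqcard] at hle
    omega
  obtain ⟨l0, hl0L, hl0p, hl0q⟩ := hp.2 q hq hpq.symm
  have hunion : L = Sp ∪ Sq := by
    apply subset_antisymm
    · intro l hl
      rcases main l hl with h | h
      · exact Or.inl ⟨hl, h⟩
      · exact Or.inr ⟨hl, h⟩
    · rintro l (hl | hl) <;> exact hl.1
  have hinter : Sp ∩ Sq = {l0} := by
    apply subset_antisymm
    · rintro l1 ⟨⟨_, hl1p⟩, _, hl1q⟩
      exact PPaux.line_unique hpq hl1p hl1q hl0p hl0q
    · rintro l1 rfl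
      exact ⟨⟨hl0L, hl0p⟩, hl0L, hl0q⟩
  have hcount := Set.ncard_union_add_ncard_inter Sp Sq hSpfin hSqfin
  rw [← hunion, hinter, Set.ncard_singleton, hSpcard, hSqcard] at hcount
  exact ⟨main, by omega⟩
end

section
/- Let L be a supersolvable line arrangement with a modular point p of multiplicity 2 and a crossing point q of multiplicity n > 2. Then every crossing point of L is modular, and L is a near pencil: it has n+1 lines, exactly n of which pass through q. -/
open Projectivization

section NearPencilHelpers

variable {K : Type*} [Field K]


lemma rep_pair_indep {a b : PP K} (h : a ≠ b) : LinearIndependent K ![a.rep, b.rep] := by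
  rw [LinearIndependent.pair_iff]
  intro s t hst
  by_cases ht : t = 0
  · subst ht
    rw [zero_smul, add_zero, smul_eq_zero] at hst
    exact ⟨hst.resolve_right a.rep_nonzero, rfl⟩
  · exfalso
    apply h
    have h1 : t • b.rep = (-s) • a.rep := by
      rw [neg_smul, eq_neg_iff_add_eq_zero, add_comm]
      exact hst
    have hb : b.rep = (t⁻¹ * (-s)) • a.rep := by
      rw [mul_smul, ← h1, inv_smul_smul₀ ht]
    have : Projectivization.mk K b.rep b.rep_nonzero
        = Projectivization.mk K a.rep a.rep_nonzero := by
      rw [Projectivization.mk_eq_mk_iff']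
      exact ⟨t⁻¹ * (-s), hb.symm⟩
    rw [Projectivization.mk_rep, Projectivization.mk_rep] at this
    exact this.symm

lemma point_unique {l m r s : PP K} (hlm : l ≠ m)
    (h1 : incid r l) (h2 : incid r m) (h3 : incid s l) (h4 : incid s m) : r = s := by
  classical
  set M : Matrix (Fin 2) (Fin 3) K := Matrix.of ![l.rep, m.rep] with hMdef
  have hM : LinearIndependent K M := rep_pair_indep hlm
  have hrank : M.rank = 2 := by simpa using hM.rank_matrix
  have hrn := M.mulVecLin.finrank_range_add_finrank_ker
  rw [Module.finrank_fin_fun] at hrn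
  have hker : Module.finrank K (LinearMap.ker M.mulVecLin) = 1 := by
    have : Module.finrank K (LinearMap.range M.mulVecLin) = 2 := hrank
    omega
  have hmem : ∀ t : PP K, incid t l → incid t m → t.rep ∈ LinearMap.ker M.mulVecLin := by
    intro t htl htm
    rw [LinearMap.mem_ker]
    funext i
    fin_cases i
    · simpa [M, Matrix.mulVec, dotProduct, Fin.sum_univ_three, incid, mul_comm] using htl
    · simpa [M, Matrix.mulVec, dotProduct, Fin.sum_univ_three, incid, mul_comm] using htm
  have hspan : Submodule.span K {r.rep} = LinearMap.ker M.mulVecLin := by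
    apply Submodule.eq_of_le_of_finrank_le
    · rw [Submodule.span_le, Set.singleton_subset_iff]
      exact hmem r h1 h2
    · rw [hker, finrank_span_singleton r.rep_nonzero]
  have hs : s.rep ∈ Submodule.span K {r.rep} := hspan ▸ hmem s h3 h4
  obtain ⟨c, hc⟩ := Submodule.mem_span_singleton.1 hs
  have : Projectivization.mk K s.rep s.rep_nonzero
      = Projectivization.mk K r.rep r.rep_nonzero := by
    rw [Projectivization.mk_eq_mk_iff']
    exact ⟨c, hc⟩
  rw [Projectivization.mk_rep, Projectivization.mk_rep] at this
  exact this.symm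

lemma exists_point (l m : PP K) : ∃ r : PP K, incid r l ∧ incid r m := by
  classical
  set M : Matrix (Fin 2) (Fin 3) K := Matrix.of ![l.rep, m.rep] with hMdef
  have hni : ¬ Function.Injective M.mulVecLin := by
    intro h
    have := LinearMap.finrank_le_finrank_of_injective h
    rw [Module.finrank_fin_fun, Module.finrank_fin_fun] at this
    omega
  rw [Function.not_injective_iff] at hni
  obtain ⟨a, b, hab, hne⟩ := hni
  have hx : a - b ≠ 0 := sub_ne_zero_of_ne hne
  have hfx : M.mulVec (a - b) = 0 := by
    have h2 := M.mulVecLin.map_sub a b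
    simp only [Matrix.mulVecLin_apply] at h2 hab
    rw [h2, hab, sub_self]
  refine ⟨Projectivization.mk K (a - b) hx, ?_, ?_⟩ <;>
  · obtain ⟨c, hc⟩ := Projectivization.exists_smul_eq_mk_rep K (a - b) hx
    show dotProduct _ _ = 0
    rw [← hc, smul_dotProduct]
    have h0 : dotProduct (a-b) l.rep = 0 ∧ dotProduct (a-b) m.rep = 0 := by
      constructor
      · have := congrFun hfx 0
        simpa [M, Matrix.mulVec, dotProduct, Fin.sum_univ_three, mul_comm] using this
      · have := congrFun hfx 1
        simpa [M, Matrix.mulVec, dotProduct, Fin.sum_univ_three, mul_comm] using this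
    first
    | (rw [h0.1]; simp)
    | (rw [h0.2]; simp)


end NearPencilHelpers

section NearPencilHelpers2

variable {K : Type*} [Field K]


lemma crossing_of_two {L : Set (PP K)} (hfin : L.Finite) {x a b : PP K}
    (ha : a ∈ L) (hb : b ∈ L) (hab : a ≠ b) (h1 : incid x a) (h2 : incid x b) :
    crossing L x := by
  have hsub : ({a, b} : Set (PP K)) ⊆ {l ∈ L | incid x l} := by
    rintro t (rfl | rfl)
    · exact ⟨ha, h1⟩
    · exact ⟨hb, h2⟩
  have := Set.ncard_le_ncard hsub (hfin.subset (Set.sep_subset _ _))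
  rwa [Set.ncard_pair hab] at this

/-- The heart of the argument, with the two lines through `p` named so that `q`
lies on `e`. -/
lemma main_aux {L : Set (PP K)} (hfin : L.Finite) {p q e f : PP K} {n : ℕ}
    (hp : modular L p) (hef : e ≠ f)
    (hPset : {l ∈ L | incid p l} = {e, f})
    (hqe : incid q e) (hqn : mult L q = n) (hn : 2 < n) (hqp : q ≠ p) :
    (∀ r, crossing L r → modular L r) ∧ isNearPencil L ∧
      L.ncard = n + 1 ∧ {l ∈ L | incid q l}.ncard = n := by
  classical
  have heL : e ∈ L ∧ incid p e := by
    have : e ∈ {l ∈ L | incid p l} := by rw [hPset]; left; rfl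
    exact this
  have hfL : f ∈ L ∧ incid p f := by
    have : f ∈ {l ∈ L | incid p l} := by rw [hPset]; right; rfl
    exact this
  have hqf : ¬ incid q f := fun h => hqp (point_unique hef hqe h heL.2 hfL.2)
  set Q : Set (PP K) := {l ∈ L | incid q l} with hQdef
  have hQfin : Q.Finite := hfin.subset (Set.sep_subset _ _)
  have hQn : Q.ncard = n := hqn
  -- three distinct lines through q
  obtain ⟨a, ha⟩ : Q.Nonempty := by
    rw [← Set.ncard_pos hQfin, hQn]; omega
  have h2 : 1 < (Q \ {a}).ncard := by
    rw [Set.ncard_diff_singleton_of_mem ha, hQn]; omega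
  obtain ⟨b, hb, c, hc, hbc⟩ := (Set.one_lt_ncard (hQfin.subset Set.diff_subset)).1 h2
  have hab : a ≠ b := fun h => hb.2 (by simp [← h])
  have hac : a ≠ c := fun h => hc.2 (by simp [← h])
  have hbQ : b ∈ Q := hb.1
  have hcQ : c ∈ Q := hc.1
  -- Step 1: every line other than f passes through q
  have key : ∀ m ∈ L, m ≠ f → incid q m := by
    intro m hm hmf
    by_contra hqm
    have hme : m ≠ e := fun h => hqm (h ▸ hqe)
    have hpm' : ¬ incid p m := by
      intro h
      have : m ∈ {l ∈ L | incid p l} := ⟨hm, h⟩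
      rw [hPset] at this
      rcases this with h' | h'
      · exact hme h'
      · exact hmf h'
    have keypt : ∀ t, t ∈ Q → ∃ x, incid x m ∧ incid x t ∧ (incid x e ∨ incid x f) := by
      rintro t ⟨htL, hqt⟩
      have hmt : m ≠ t := fun h => hqm (h ▸ hqt)
      obtain ⟨x, hxm, hxt⟩ := exists_point m t
      have hxcr : crossing L x := crossing_of_two hfin hm htL hmt hxm hxt
      have hxp : x ≠ p := fun h => hpm' (h ▸ hxm)
      obtain ⟨l, hlL, hpl, hxl⟩ := hp.2 x hxcr hxp
      have : l ∈ ({e, f} : Set (PP K)) := hPset ▸ ⟨hlL, hpl⟩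
      rcases this with rfl | rfl
      · exact ⟨x, hxm, hxt, Or.inl hxl⟩
      · exact ⟨x, hxm, hxt, Or.inr hxl⟩
    obtain ⟨xa, hxam, hxaa, hxa⟩ := keypt a ha
    obtain ⟨xb, hxbm, hxbb, hxb⟩ := keypt b hbQ
    obtain ⟨xc, hxcm, hxcc, hxc⟩ := keypt c hcQ
    -- the three intersection points are pairwise distinct
    have hdist : ∀ {u v xu xv : PP K}, u ∈ Q → v ∈ Q → u ≠ v →
        incid xu m → incid xu u → incid xv m → incid xv v → xu ≠ xv := by
      rintro u v xu xv huQ hvQ huv hxum hxuu hxvm hxvv rfl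
      have : xu = q := point_unique huv hxuu hxvv huQ.2 hvQ.2
      exact hqm (this ▸ hxum)
    have dab : xa ≠ xb := hdist ha hbQ hab hxam hxaa hxbm hxbb
    have dac : xa ≠ xc := hdist ha hcQ hac hxam hxaa hxcm hxcc
    have dbc : xb ≠ xc := hdist hbQ hcQ hbc hxbm hxbb hxcm hxcc
    -- pigeonhole: two of them on the same line through p
    have contra : ∀ (x y g : PP K), x ≠ y → incid x m → incid y m → m ≠ g →
        incid x g → incid y g → False := by
      intro x y g hxy hxm hym hmg hxg hyg
      exact hxy (point_unique hmg hxm hxg hym hyg)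
    rcases hxa with h1 | h1 <;> rcases hxb with h2 | h2 <;> rcases hxc with h3 | h3
    · exact contra xa xb e dab hxam hxbm hme h1 h2
    · exact contra xa xb e dab hxam hxbm hme h1 h2
    · exact contra xa xc e dac hxam hxcm hme h1 h3
    · exact contra xb xc f dbc hxbm hxcm hmf h2 h3
    · exact contra xb xc e dbc hxbm hxcm hme h2 h3
    · exact contra xa xc f dac hxam hxcm hmf h1 h3
    · exact contra xa xb f dab hxam hxbm hmf h1 h2
    · exact contra xa xb f dab hxam hxbm hmf h1 h2
  -- Step 2: Q = L \ {f}
  have hQeq : Q = L \ {f} := by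
    ext l
    constructor
    · rintro ⟨hlL, hql⟩
      exact ⟨hlL, fun h => hqf (by rwa [Set.mem_singleton_iff.1 h] at hql)⟩
    · rintro ⟨hlL, hlf⟩
      exact ⟨hlL, key l hlL hlf⟩
  have hLpos : 1 ≤ L.ncard := (Set.ncard_pos hfin).2 ⟨f, hfL.1⟩
  have hcard : L.ncard = n + 1 := by
    have := Set.ncard_diff_singleton_of_mem hfL.1
    rw [← hQeq, hQn] at this
    omega
  -- Step 3: modularity of all crossing points
  have haux : ∀ r, crossing L r → r ≠ q → incid r f ∧ ∃ g ∈ L, g ≠ f ∧ incid r g := by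
    intro r hr hrq
    have h2' : 1 < {l ∈ L | incid r l}.ncard := hr
    obtain ⟨u, hu, v, hv, huv⟩ :=
      (Set.one_lt_ncard (hfin.subset (Set.sep_subset _ _))).1 h2'
    by_cases huf : u = f
    · have hvf : v ≠ f := fun h => huv (h.trans huf.symm).symm
      exact ⟨huf ▸ hu.2, v, hv.1, hvf, hv.2⟩
    · by_cases hvf : v = f
      · exact ⟨hvf ▸ hv.2, u, hu.1, huf, hu.2⟩
      · exfalso
        have hqu : incid q u := key u hu.1 huf
        have hqv : incid q v := key v hv.1 hvf
        exact hrq (point_unique huv hu.2 hv.2 hqu hqv)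
  have hmodall : ∀ r, crossing L r → modular L r := by
    intro r hr
    refine ⟨hr, fun s hs hsr => ?_⟩
    by_cases hrq : r = q
    · subst hrq
      obtain ⟨_, g, hgL, hgf, hsg⟩ := haux s hs hsr
      exact ⟨g, hgL, key g hgL hgf, hsg⟩
    · obtain ⟨hrf, g, hgL, hgf, hrg⟩ := haux r hr hrq
      by_cases hsq : s = q
      · subst hsq
        exact ⟨g, hgL, hrg, key g hgL hgf⟩
      · obtain ⟨hsf, _⟩ := haux s hs hsq
        exact ⟨f, hfL.1, hrf, hsf⟩
  refine ⟨hmodall, ⟨by omega, q, by rw [← hQdef, hQn, hcard]⟩, hcard, hQn⟩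


end NearPencilHelpers2

/-- if p is a modular point of multiplicity 2 and q is a crossing
point of multiplicity n > 2, then every crossing point of L is modular and L is
a near pencil with n + 1 lines, exactly n of which pass through q. -/
theorem near_pencil_from_modular_double_point {K : Type*} [Field K] (L : Set (PP K))
    (hfin : L.Finite) (p q : PP K) (n : ℕ)
    (hp : modular L p) (hpm : mult L p = 2)
    (hq : crossing L q) (hqn : mult L q = n) (hn : 2 < n) :
    (∀ r, crossing L r → modular L r) ∧ isNearPencil L ∧
      L.ncard = n + 1 ∧ {l ∈ L | incid q l}.ncard = n := by
  classical
  obtain ⟨l1, l2, h12, hP⟩ := Set.ncard_eq_two.mp hpm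
  have hqp : q ≠ p := by
    intro h
    rw [h, hpm] at hqn
    omega
  obtain ⟨l0, hl0L, hl0p, hl0q⟩ := hp.2 q hq hqp
  have hl0 : l0 ∈ ({l1, l2} : Set (PP K)) := hP ▸ ⟨hl0L, hl0p⟩
  rcases hl0 with rfl | rfl
  · exact main_aux hfin hp h12 hP hl0q hqn hn hqp
  · exact main_aux hfin hp h12.symm (by rw [hP, Set.pair_comm]) hl0q hqn hn hqp
end

section
/- In an m-homogeneous supersolvable complex line arrangement with m ≥ 3, no three modular points are collinear. -/
open Projectivization

namespace NoThreeAux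

open Matrix

variable {x y z n w c : Fin 3 → ℂ}

lemma incid_mk {x y : Fin 3 → ℂ} (hx : x ≠ 0) (hy : y ≠ 0) :
    incid (mk ℂ x hx) (mk ℂ y hy) ↔ x ⬝ᵥ y = 0 := by
  obtain ⟨a, ha⟩ := exists_smul_eq_mk_rep ℂ x hx
  obtain ⟨b, hb⟩ := exists_smul_eq_mk_rep ℂ y hy
  unfold incid
  rw [← ha, ← hb, Units.smul_def, Units.smul_def, smul_dotProduct, dotProduct_smul,
    smul_eq_mul, smul_eq_mul, mul_eq_zero, mul_eq_zero]
  simp [a.ne_zero, b.ne_zero]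

lemma pair_flip (h : LinearIndependent ℂ ![x, y]) : LinearIndependent ℂ ![y, x] := by
  rw [LinearIndependent.pair_iff] at h ⊢
  intro s t hst
  exact (h t s (by linear_combination hst)).symm

lemma awc_ne_zero (hind : LinearIndependent ℂ ![w, c]) (a : ℂ) : a • w + c ≠ 0 := by
  intro h
  have := (LinearIndependent.pair_iff.1 hind) a 1 (by simpa using h)
  simp at this

lemma not_smul_of_indep (hind : LinearIndependent ℂ ![w, c]) (t : ℂ) : c ≠ t • w := by
  intro h
  have h0 : (-t) • w + (1 : ℂ) • c = 0 := by rw [h]; module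
  have := (LinearIndependent.pair_iff.1 hind (-t) 1 h0).2
  simp at this

lemma indep_of_mk_ne {x y : Fin 3 → ℂ} (hx : x ≠ 0) (hy : y ≠ 0)
    (h : mk ℂ x hx ≠ mk ℂ y hy) : LinearIndependent ℂ ![x, y] := by
  rw [linearIndependent_fin2]
  refine ⟨hy, fun a hxa => h ?_⟩
  simp only [Matrix.cons_val_zero, Matrix.cons_val_one, Matrix.head_cons] at hxa
  have ha : a ≠ 0 := by rintro rfl; simp at hxa; exact hx hxa.symm
  rw [mk_eq_mk_iff]
  exact ⟨Units.mk0 a ha, by simp [Units.smul_def, hxa]⟩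

lemma indep_of_ne {p q : PP ℂ} (h : p ≠ q) : LinearIndependent ℂ ![p.rep, q.rep] := by
  refine indep_of_mk_ne p.rep_nonzero q.rep_nonzero ?_
  simpa [mk_rep] using h

lemma mk_eq_of_smul {x y : Fin 3 → ℂ} (hx : x ≠ 0) (hy : y ≠ 0) {k : ℂ} (hk : k ≠ 0)
    (h : x = k • y) : mk ℂ x hx = mk ℂ y hy := by
  rw [mk_eq_mk_iff]
  exact ⟨Units.mk0 k hk, by simp [Units.smul_def, h]⟩

lemma cross_cross_eq (x y z : Fin 3 → ℂ) :
    crossProduct z (crossProduct x y) = (z ⬝ᵥ y) • x - (z ⬝ᵥ x) • y := by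
  ext i
  fin_cases i <;>
    simp [cross_apply, dotProduct, Fin.sum_univ_three] <;> ring

lemma eq_smul_cross_of_dot (hli : LinearIndependent ℂ ![x, y])
    (h1 : z ⬝ᵥ x = 0) (h2 : z ⬝ᵥ y = 0) : ∃ k : ℂ, z = k • crossProduct x y := by
  have hc : crossProduct x y ≠ 0 := crossProduct_ne_zero_iff_linearIndependent.2 hli
  have hzc : crossProduct z (crossProduct x y) = 0 := by
    rw [cross_cross_eq, h1, h2]; simp
  have hdep : ¬ LinearIndependent ℂ ![z, crossProduct x y] := by
    intro h; exact (crossProduct_ne_zero_iff_linearIndependent.2 h) hzc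
  rw [linearIndependent_fin2] at hdep
  push_neg at hdep
  obtain ⟨a, ha⟩ := hdep hc
  simp only [Matrix.cons_val_zero, Matrix.cons_val_one, Matrix.head_cons] at ha
  exact ⟨a, by rw [← ha]⟩

/-- the linear functional `z ↦ z ⬝ᵥ n` -/
noncomputable def dotFun (n : Fin 3 → ℂ) : (Fin 3 → ℂ) →ₗ[ℂ] ℂ where
  toFun z := z ⬝ᵥ n
  map_add' x y := add_dotProduct x y n
  map_smul' a x := smul_dotProduct a x n

lemma finrank_ker_dotFun (hn : n ≠ 0) :
    Module.finrank ℂ (LinearMap.ker (dotFun n)) = 2 := by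
  have hsurj : LinearMap.range (dotFun n) = ⊤ := by
    obtain ⟨i, hi⟩ : ∃ i, n i ≠ 0 := by
      by_contra h; push_neg at h; exact hn (funext h)
    rw [LinearMap.range_eq_top]
    intro a
    refine ⟨(a * (n i)⁻¹) • (Pi.single i 1 : Fin 3 → ℂ), ?_⟩
    show ((a * (n i)⁻¹) • (Pi.single i 1 : Fin 3 → ℂ)) ⬝ᵥ n = a
    rw [smul_dotProduct, single_dotProduct, smul_eq_mul]
    field_simp
  have h3 : Module.finrank ℂ (Fin 3 → ℂ) = 3 := by simp
  have := LinearMap.finrank_range_add_finrank_ker (dotFun n)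
  rw [hsurj, finrank_top, h3, Module.finrank_self] at this
  omega

lemma mem_span_pair_of_dot (hn : n ≠ 0)
    (hli : LinearIndependent ℂ ![x, y]) (hx : x ⬝ᵥ n = 0) (hy : y ⬝ᵥ n = 0)
    (hz : z ⬝ᵥ n = 0) : ∃ a b : ℂ, z = a • x + b • y := by
  have hspan : Submodule.span ℂ (Set.range ![x, y]) = LinearMap.ker (dotFun n) := by
    apply Submodule.eq_of_le_of_finrank_le
    · rw [Submodule.span_le]
      rintro t ⟨i, rfl⟩
      fin_cases i
      · simpa [dotFun] using hx
      · simpa [dotFun] using hy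
    · rw [finrank_ker_dotFun hn, finrank_span_eq_card hli]
      simp
  have hzmem : z ∈ Submodule.span ℂ (Set.range ![x, y]) := by
    rw [hspan]
    simpa [dotFun] using hz
  rw [Submodule.mem_span_range_iff_exists_fun] at hzmem
  obtain ⟨co, hc⟩ := hzmem
  refine ⟨co 0, co 1, ?_⟩
  rw [← hc, Fin.sum_univ_two]
  simp

lemma exists_perp_indep (hn : n ≠ 0) (hw : w ⬝ᵥ n = 0) (hw0 : w ≠ 0) :
    ∃ c, c ⬝ᵥ n = 0 ∧ LinearIndependent ℂ ![w, c] := by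
  have hlt : Submodule.span ℂ {w} < LinearMap.ker (dotFun n) := by
    refine lt_of_le_of_ne ?_ ?_
    · rw [Submodule.span_le, Set.singleton_subset_iff]
      simpa [dotFun] using hw
    · intro h
      have h1 : Module.finrank ℂ (Submodule.span ℂ ({w} : Set (Fin 3 → ℂ))) = 1 :=
        finrank_span_singleton hw0
      rw [h, finrank_ker_dotFun hn] at h1
      omega
  obtain ⟨c, hcmem, hcnot⟩ := SetLike.exists_of_lt hlt
  refine ⟨c, by simpa [dotFun] using hcmem, ?_⟩
  rw [linearIndependent_fin2]
  simp only [Matrix.cons_val_zero, Matrix.cons_val_one, Matrix.head_cons]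
  constructor
  · intro h
    exact hcnot (h ▸ Submodule.zero_mem _)
  · intro a h
    have ha : a ≠ 0 := by rintro rfl; simp at h; exact hw0 h.symm
    refine hcnot (Submodule.mem_span_singleton.2 ⟨a⁻¹, ?_⟩)
    rw [← h, smul_smul, inv_mul_cancel₀ ha, one_smul]

lemma expand_key (w c₁ c₂ c₃ : Fin 3 → ℂ) (a b c : ℂ) :
    crossProduct (a • w + c₁) (b • w + c₂) ⬝ᵥ (c • w + c₃)
      = crossProduct c₁ c₂ ⬝ᵥ c₃ + a * (crossProduct w c₂ ⬝ᵥ c₃)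
        + b * (crossProduct c₁ w ⬝ᵥ c₃) + c * (crossProduct c₁ c₂ ⬝ᵥ w) := by
  simp [cross_apply, dotProduct, Fin.sum_univ_three]
  ring

lemma pencil_repr {u w c s : Fin 3 → ℂ} (hu : u ≠ 0) (hwu : w ⬝ᵥ u = 0) (hcu : c ⬝ᵥ u = 0)
    (hind : LinearIndependent ℂ ![w, c]) (hsu : s ⬝ᵥ u = 0)
    (hsw : ∀ t : ℂ, s ≠ t • w) : ∃ a k : ℂ, k ≠ 0 ∧ s = k • (a • w + c) := by
  obtain ⟨lam, mu, hlm⟩ := mem_span_pair_of_dot hu hind hwu hcu hsu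
  have hmu : mu ≠ 0 := by
    rintro rfl
    exact hsw lam (by simpa using hlm)
  refine ⟨lam / mu, mu, hmu, ?_⟩
  rw [hlm, smul_add, smul_smul]
  field_simp

lemma indep_w_awc (hind : LinearIndependent ℂ ![w, c]) (a : ℂ) :
    LinearIndependent ℂ ![w, a • w + c] := by
  rw [LinearIndependent.pair_iff] at hind ⊢
  intro s t hst
  have h0 : (s + t * a) • w + t • c = s • w + t • (a • w + c) := by module
  have := hind (s + t * a) t (h0.trans hst)
  obtain ⟨h1, h2⟩ := this
  subst h2
  simp at h1
  exact ⟨h1, rfl⟩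

lemma line_unique {p q l l' : PP ℂ} (hpq : p ≠ q) (h1 : incid p l) (h2 : incid q l)
    (h3 : incid p l') (h4 : incid q l') : l = l' := by
  have hli := indep_of_ne hpq
  have e1 : l.rep ⬝ᵥ p.rep = 0 := by rw [dotProduct_comm]; exact h1
  have e2 : l.rep ⬝ᵥ q.rep = 0 := by rw [dotProduct_comm]; exact h2
  have e3 : l'.rep ⬝ᵥ p.rep = 0 := by rw [dotProduct_comm]; exact h3
  have e4 : l'.rep ⬝ᵥ q.rep = 0 := by rw [dotProduct_comm]; exact h4
  obtain ⟨k, hk⟩ := eq_smul_cross_of_dot hli e1 e2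
  obtain ⟨k', hk'⟩ := eq_smul_cross_of_dot hli e3 e4
  have hk0 : k ≠ 0 := by rintro rfl; rw [zero_smul] at hk; exact l.rep_nonzero hk
  have hk'0 : k' ≠ 0 := by rintro rfl; rw [zero_smul] at hk'; exact l'.rep_nonzero hk'
  have hrel : l.rep = (k / k') • l'.rep := by
    rw [hk, hk', smul_smul, div_mul_cancel₀ _ hk'0]
  calc l = mk ℂ l.rep l.rep_nonzero := (mk_rep l).symm
    _ = mk ℂ l'.rep l'.rep_nonzero := mk_eq_of_smul _ _ (div_ne_zero hk0 hk'0) hrel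
    _ = l' := mk_rep l'

lemma pt_inj {w c : Fin 3 → ℂ} (hind : LinearIndependent ℂ ![w, c]) {a a' : ℂ}
    (h : mk ℂ (a • w + c) (awc_ne_zero hind a) = mk ℂ (a' • w + c) (awc_ne_zero hind a')) :
    a = a' := by
  rw [mk_eq_mk_iff] at h
  obtain ⟨t, ht⟩ := h
  rw [Units.smul_def] at ht
  have h0 : ((t : ℂ) * a' - a) • w + ((t : ℂ) - 1) • c
      = (t : ℂ) • (a' • w + c) - (a • w + c) := by module
  rw [ht, sub_self] at h0
  obtain ⟨h1, h2⟩ := LinearIndependent.pair_iff.1 hind _ _ h0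
  have ht1 : (t : ℂ) = 1 := by linear_combination h2
  rw [ht1] at h1
  linear_combination -h1

lemma pt_mem_pencil {P l : PP ℂ} {c : Fin 3 → ℂ} (hPl : incid P l)
    (hc : c ⬝ᵥ P.rep = 0) (hind : LinearIndependent ℂ ![l.rep, c]) (a : ℂ) :
    incid P (mk ℂ (a • l.rep + c) (awc_ne_zero hind a)) ∧
      mk ℂ (a • l.rep + c) (awc_ne_zero hind a) ≠ l := by
  constructor
  · rw [show P = mk ℂ P.rep P.rep_nonzero from (mk_rep P).symm, incid_mk]
    rw [dotProduct_add, dotProduct_smul]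
    have h1 : P.rep ⬝ᵥ l.rep = 0 := hPl
    have h2 : P.rep ⬝ᵥ c = 0 := (dotProduct_comm P.rep c).trans hc
    rw [h1, h2]
    simp
  · intro h
    obtain ⟨t, ht⟩ := exists_smul_eq_mk_rep ℂ (a • l.rep + c) (awc_ne_zero hind a)
    rw [h] at ht
    have ht2 : a • l.rep + c = ((t : ℂ))⁻¹ • l.rep := by
      have h2 := congrArg (fun z => ((t : ℂ))⁻¹ • z) ht
      simpa [Units.smul_def, smul_smul, inv_mul_cancel₀ (Units.ne_zero t)] using h2
    refine not_smul_of_indep hind (((t : ℂ))⁻¹ - a) ?_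
    rw [sub_smul, ← ht2]
    module

lemma pencil_surj {P l l' : PP ℂ} {c : Fin 3 → ℂ} (hPl : incid P l)
    (hc : c ⬝ᵥ P.rep = 0) (hind : LinearIndependent ℂ ![l.rep, c])
    (hPl' : incid P l') (hne : l' ≠ l) :
    ∃ a : ℂ, mk ℂ (a • l.rep + c) (awc_ne_zero hind a) = l' := by
  have hsw : ∀ t : ℂ, l'.rep ≠ t • l.rep := by
    intro t h
    have ht : t ≠ 0 := by rintro rfl; rw [zero_smul] at h; exact l'.rep_nonzero h
    refine hne ?_
    calc l' = mk ℂ l'.rep l'.rep_nonzero := (mk_rep l').symm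
      _ = mk ℂ l.rep l.rep_nonzero := mk_eq_of_smul _ _ ht h
      _ = l := mk_rep l
  have e1 : l.rep ⬝ᵥ P.rep = 0 := by rw [dotProduct_comm]; exact hPl
  have e2 : l'.rep ⬝ᵥ P.rep = 0 := by rw [dotProduct_comm]; exact hPl'
  obtain ⟨a, k, hk0, hs⟩ := pencil_repr P.rep_nonzero e1 hc hind e2 hsw
  refine ⟨a, ?_⟩
  calc mk ℂ (a • l.rep + c) (awc_ne_zero hind a)
      = mk ℂ l'.rep l'.rep_nonzero := (mk_eq_of_smul _ _ hk0 hs).symm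
    _ = l' := mk_rep l'

lemma pencil_card {L : Set (PP ℂ)} (hfin : L.Finite) {P l : PP ℂ} (hlL : l ∈ L)
    (hPl : incid P l) {c : Fin 3 → ℂ} (hc : c ⬝ᵥ P.rep = 0)
    (hind : LinearIndependent ℂ ![l.rep, c]) :
    {a : ℂ | mk ℂ (a • l.rep + c) (awc_ne_zero hind a) ∈ L}.Finite ∧
    {a : ℂ | mk ℂ (a • l.rep + c) (awc_ne_zero hind a) ∈ L}.ncard + 1 = mult L P := by
  set f : ℂ → PP ℂ := fun a => mk ℂ (a • l.rep + c) (awc_ne_zero hind a) with hf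
  set A : Set ℂ := {a : ℂ | f a ∈ L} with hA
  have himg : f '' A = {l' ∈ L | incid P l'} \ {l} := by
    ext l'
    constructor
    · rintro ⟨a, haA, rfl⟩
      obtain ⟨hinc, hne⟩ := pt_mem_pencil hPl hc hind a
      exact ⟨⟨haA, hinc⟩, hne⟩
    · rintro ⟨⟨hL', hP'⟩, hne⟩
      obtain ⟨a, ha⟩ := pencil_surj hPl hc hind hP' hne
      refine ⟨a, ?_, ha⟩
      show f a ∈ L
      rw [show f a = l' from ha]
      exact hL'
  have hSfin : ({l' ∈ L | incid P l'} \ {l}).Finite :=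
    (hfin.subset (Set.sep_subset _ _)).subset Set.diff_subset
  have hinj : Set.InjOn f A := fun a _ a' _ h => pt_inj hind h
  have hAfin : A.Finite := by
    have := himg ▸ hSfin
    exact Set.Finite.of_finite_image this hinj
  refine ⟨hAfin, ?_⟩
  have h1 : A.ncard = ({l' ∈ L | incid P l'} \ {l}).ncard := by
    rw [← himg, Set.ncard_image_of_injOn hinj]
  have hmem : l ∈ {l' ∈ L | incid P l'} := ⟨hlL, hPl⟩
  have h2 : ({l' ∈ L | incid P l'} \ {l}).ncard + 1 = {l' ∈ L | incid P l'}.ncard :=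
    Set.ncard_diff_singleton_add_one hmem (hfin.subset (Set.sep_subset _ _))
  rw [h1, h2]
  rfl

lemma incid_mk_left {x : Fin 3 → ℂ} (hx : x ≠ 0) (l : PP ℂ) :
    incid (mk ℂ x hx) l ↔ x ⬝ᵥ l.rep = 0 := by
  conv_lhs => rw [← mk_rep l]
  exact incid_mk hx l.rep_nonzero

lemma incid_mk_right (p : PP ℂ) {y : Fin 3 → ℂ} (hy : y ≠ 0) :
    incid p (mk ℂ y hy) ↔ p.rep ⬝ᵥ y = 0 := by
  conv_lhs => rw [← mk_rep p]
  exact incid_mk p.rep_nonzero hy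

end NoThreeAux

open Matrix Pointwise NoThreeAux

/-- in an m-homogeneous supersolvable complex line arrangement with
m ≥ 3, no three modular points are collinear. -/
theorem no_three_modular_collinear (L : Set (PP ℂ)) (hfin : L.Finite) (m : ℕ)
    (hm : 3 ≤ m) (hss : ∃ p, modular L p)
    (hhomog : ∀ p, modular L p → mult L p = m) :
    ∀ p q r : PP ℂ, modular L p → modular L q → modular L r →
      p ≠ q → p ≠ r → q ≠ r →
      ¬ ∃ l : PP ℂ, incid p l ∧ incid q l ∧ incid r l := by
  classical
  rintro p q r hp hq hr hpq hpr hqr ⟨l0, hpl0, hql0, hrl0⟩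
  obtain ⟨l, hlL, hpl, hql⟩ := hp.2 q hq.1 (Ne.symm hpq)
  have hl0l : l0 = l := line_unique hpq hpl0 hql0 hpl hql
  have hrl : incid r l := hl0l ▸ hrl0
  -- basic dot facts
  have duw : p.rep ⬝ᵥ l.rep = 0 := hpl
  have dvw : q.rep ⬝ᵥ l.rep = 0 := hql
  have drw : r.rep ⬝ᵥ l.rep = 0 := hrl
  have dwu : l.rep ⬝ᵥ p.rep = 0 := by rw [dotProduct_comm]; exact duw
  have dwv : l.rep ⬝ᵥ q.rep = 0 := by rw [dotProduct_comm]; exact dvw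
  have dwr : l.rep ⬝ᵥ r.rep = 0 := by rw [dotProduct_comm]; exact drw
  have hliuv : LinearIndependent ℂ ![p.rep, q.rep] := indep_of_ne hpq
  obtain ⟨k, hkw⟩ := eq_smul_cross_of_dot hliuv dwu dwv
  have hk0 : k ≠ 0 := by rintro rfl; rw [zero_smul] at hkw; exact l.rep_nonzero hkw
  -- any vector orthogonal to both p.rep and q.rep is a multiple of l.rep
  have subw : ∀ s : Fin 3 → ℂ, s ⬝ᵥ p.rep = 0 → s ⬝ᵥ q.rep = 0 →
      ∃ t : ℂ, s = t • l.rep := by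
    intro s h1 h2
    obtain ⟨k', hk'⟩ := eq_smul_cross_of_dot hliuv h1 h2
    exact ⟨k' / k, by rw [hk', hkw, smul_smul, div_mul_cancel₀ _ hk0]⟩
  -- r.rep = α • p.rep + β • q.rep with α, β ≠ 0
  have hcross0 : crossProduct p.rep q.rep ≠ 0 :=
    crossProduct_ne_zero_iff_linearIndependent.2 hliuv
  have hrperp : r.rep ⬝ᵥ crossProduct p.rep q.rep = 0 := by
    have h := drw
    rw [hkw, dotProduct_smul, smul_eq_mul, mul_eq_zero] at h
    exact h.resolve_left hk0
  obtain ⟨α, β, hαβ⟩ := mem_span_pair_of_dot hcross0 hliuv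
    (dot_self_cross _ _) (dot_cross_self _ _) hrperp
  have hβ0 : β ≠ 0 := by
    rintro rfl
    rw [zero_smul, add_zero] at hαβ
    have hα : α ≠ 0 := by rintro rfl; rw [zero_smul] at hαβ; exact r.rep_nonzero hαβ
    refine hpr ?_
    calc p = mk ℂ p.rep p.rep_nonzero := (mk_rep p).symm
      _ = mk ℂ r.rep r.rep_nonzero := (mk_eq_of_smul _ _ hα hαβ).symm
      _ = r := mk_rep r
  have hα0 : α ≠ 0 := by
    rintro rfl
    rw [zero_smul, zero_add] at hαβ
    refine (Ne.symm hqr) ?_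
    calc r = mk ℂ r.rep r.rep_nonzero := (mk_rep r).symm
      _ = mk ℂ q.rep q.rep_nonzero := mk_eq_of_smul _ _ hβ0 hαβ
      _ = q := mk_rep q
  -- auxiliary vectors completing l.rep to bases of the three pencils
  obtain ⟨c₁, hc₁u, hind₁⟩ := exists_perp_indep p.rep_nonzero dwu l.rep_nonzero
  obtain ⟨c₂, hc₂v, hind₂⟩ := exists_perp_indep q.rep_nonzero dwv l.rep_nonzero
  obtain ⟨c₃, hc₃r, hind₃⟩ := exists_perp_indep r.rep_nonzero dwr l.rep_nonzero
  have hc₁v : c₁ ⬝ᵥ q.rep ≠ 0 := by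
    intro h
    obtain ⟨t, ht⟩ := subw c₁ hc₁u h
    exact not_smul_of_indep hind₁ t ht
  have hc₂u : c₂ ⬝ᵥ p.rep ≠ 0 := by
    intro h
    obtain ⟨t, ht⟩ := subw c₂ h hc₂v
    exact not_smul_of_indep hind₂ t ht
  -- nonvanishing of the three "determinants"
  have hc₂0 : c₂ ≠ 0 := by simpa using not_smul_of_indep hind₂ 0
  have hindc12 : LinearIndependent ℂ ![c₁, c₂] := by
    rw [linearIndependent_fin2]
    refine ⟨hc₂0, fun t ht => ?_⟩
    simp only [Matrix.cons_val_zero, Matrix.cons_val_one, Matrix.head_cons] at ht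
    apply hc₁v
    rw [← ht, smul_dotProduct, hc₂v, smul_zero]
  have hD₁ : crossProduct l.rep c₂ ⬝ᵥ c₃ ≠ 0 := by
    intro h
    have hn : crossProduct l.rep c₂ ≠ 0 :=
      crossProduct_ne_zero_iff_linearIndependent.2 hind₂
    have hc₃n : c₃ ⬝ᵥ crossProduct l.rep c₂ = 0 := by rw [dotProduct_comm]; exact h
    obtain ⟨lam, mu, hlm⟩ := mem_span_pair_of_dot hn hind₂
      (dot_self_cross _ _) (dot_cross_self _ _) hc₃n
    have hc₂r : c₂ ⬝ᵥ r.rep = α * (c₂ ⬝ᵥ p.rep) := by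
      rw [hαβ, dotProduct_add, dotProduct_smul, dotProduct_smul, hc₂v, smul_zero,
        add_zero, smul_eq_mul]
    have h0 := hc₃r
    rw [hlm, add_dotProduct, smul_dotProduct, smul_dotProduct, dwr, smul_zero,
      zero_add, hc₂r, smul_eq_mul] at h0
    have hmu : mu = 0 := by
      rcases mul_eq_zero.1 h0 with h' | h'
      · exact h'
      · rcases mul_eq_zero.1 h' with h'' | h''
        · exact absurd h'' hα0
        · exact absurd h'' hc₂u
    rw [hmu, zero_smul, add_zero] at hlm
    exact not_smul_of_indep hind₃ lam hlm
  have hD₂ : crossProduct c₁ l.rep ⬝ᵥ c₃ ≠ 0 := by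
    intro h
    have hind₁' : LinearIndependent ℂ ![c₁, l.rep] := pair_flip hind₁
    have hn : crossProduct c₁ l.rep ≠ 0 :=
      crossProduct_ne_zero_iff_linearIndependent.2 hind₁'
    have hc₃n : c₃ ⬝ᵥ crossProduct c₁ l.rep = 0 := by rw [dotProduct_comm]; exact h
    obtain ⟨lam, mu, hlm⟩ := mem_span_pair_of_dot hn hind₁'
      (dot_self_cross _ _) (dot_cross_self _ _) hc₃n
    have hc₁r : c₁ ⬝ᵥ r.rep = β * (c₁ ⬝ᵥ q.rep) := by
      rw [hαβ, dotProduct_add, dotProduct_smul, dotProduct_smul, hc₁u, smul_zero,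
        zero_add, smul_eq_mul]
    have h0 := hc₃r
    rw [hlm, add_dotProduct, smul_dotProduct, smul_dotProduct, dwr, smul_zero,
      add_zero, hc₁r, smul_eq_mul] at h0
    have hlam : lam = 0 := by
      rcases mul_eq_zero.1 h0 with h' | h'
      · exact h'
      · rcases mul_eq_zero.1 h' with h'' | h''
        · exact absurd h'' hβ0
        · exact absurd h'' hc₁v
    rw [hlam, zero_smul, zero_add] at hlm
    exact not_smul_of_indep hind₃ mu hlm
  have hD₃ : crossProduct c₁ c₂ ⬝ᵥ l.rep ≠ 0 := by
    intro h
    have hn : crossProduct c₁ c₂ ≠ 0 :=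
      crossProduct_ne_zero_iff_linearIndependent.2 hindc12
    have hwn : l.rep ⬝ᵥ crossProduct c₁ c₂ = 0 := by rw [dotProduct_comm]; exact h
    obtain ⟨lam, mu, hlm⟩ := mem_span_pair_of_dot hn hindc12
      (dot_self_cross _ _) (dot_cross_self _ _) hwn
    have hdq := dwv
    rw [hlm, add_dotProduct, smul_dotProduct, smul_dotProduct, hc₂v, smul_zero,
      add_zero, smul_eq_mul] at hdq
    rcases mul_eq_zero.1 hdq with h1 | h1
    · rw [h1, zero_smul, zero_add] at hlm
      have hmu : mu ≠ 0 := by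
        rintro rfl; rw [zero_smul] at hlm; exact l.rep_nonzero hlm
      refine not_smul_of_indep hind₂ mu⁻¹ ?_
      rw [hlm, smul_smul, inv_mul_cancel₀ hmu, one_smul]
    · exact hc₁v h1
  -- the three parameter sets and their cardinalities
  obtain ⟨hAfin, hAcard⟩ := pencil_card hfin hlL hpl hc₁u hind₁
  obtain ⟨hBfin, hBcard⟩ := pencil_card hfin hlL hql hc₂v hind₂
  obtain ⟨hCfin, hCcard⟩ := pencil_card hfin hlL hrl hc₃r hind₃
  rw [hhomog p hp] at hAcard
  rw [hhomog q hq] at hBcard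
  rw [hhomog r hr] at hCcard
  -- the key combinatorial condition
  have key : ∀ a ∈ {a : ℂ | mk ℂ (a • l.rep + c₁) (awc_ne_zero hind₁ a) ∈ L},
      ∀ b ∈ {b : ℂ | mk ℂ (b • l.rep + c₂) (awc_ne_zero hind₂ b) ∈ L},
      ∃ c ∈ {c : ℂ | mk ℂ (c • l.rep + c₃) (awc_ne_zero hind₃ c) ∈ L},
      crossProduct c₁ c₂ ⬝ᵥ c₃ + a * (crossProduct l.rep c₂ ⬝ᵥ c₃)
        + b * (crossProduct c₁ l.rep ⬝ᵥ c₃) + c * (crossProduct c₁ c₂ ⬝ᵥ l.rep) = 0 := by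
    intro a ha b hb
    have hl₁L : mk ℂ (a • l.rep + c₁) (awc_ne_zero hind₁ a) ∈ L := ha
    have hl₂L : mk ℂ (b • l.rep + c₂) (awc_ne_zero hind₂ b) ∈ L := hb
    have hs₁u : (a • l.rep + c₁) ⬝ᵥ p.rep = 0 := by
      rw [add_dotProduct, smul_dotProduct, dwu, smul_zero, zero_add, hc₁u]
    have hs₂v : (b • l.rep + c₂) ⬝ᵥ q.rep = 0 := by
      rw [add_dotProduct, smul_dotProduct, dwv, smul_zero, zero_add, hc₂v]
    have hs₁w : ∀ t : ℂ, (a • l.rep + c₁) ≠ t • l.rep := by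
      intro t ht
      refine not_smul_of_indep hind₁ (t - a) ?_
      rw [sub_smul, ← ht]; module
    have hs₂w : ∀ t : ℂ, (b • l.rep + c₂) ≠ t • l.rep := by
      intro t ht
      refine not_smul_of_indep hind₂ (t - b) ?_
      rw [sub_smul, ← ht]; module
    have hindep12 : LinearIndependent ℂ ![a • l.rep + c₁, b • l.rep + c₂] := by
      rw [linearIndependent_fin2]
      refine ⟨awc_ne_zero hind₂ b, fun t ht => ?_⟩
      simp only [Matrix.cons_val_zero, Matrix.cons_val_one, Matrix.head_cons] at ht
      have h1 : (a • l.rep + c₁) ⬝ᵥ q.rep = 0 := by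
        rw [← ht, smul_dotProduct, hs₂v, smul_zero]
      obtain ⟨t', ht'⟩ := subw _ hs₁u h1
      exact hs₁w t' ht'
    have hx0 : crossProduct (a • l.rep + c₁) (b • l.rep + c₂) ≠ 0 :=
      crossProduct_ne_zero_iff_linearIndependent.2 hindep12
    -- the crossing point x
    have hxs₁ : crossProduct (a • l.rep + c₁) (b • l.rep + c₂) ⬝ᵥ (a • l.rep + c₁) = 0 := by
      rw [dotProduct_comm]; exact dot_self_cross _ _
    have hxs₂ : crossProduct (a • l.rep + c₁) (b • l.rep + c₂) ⬝ᵥ (b • l.rep + c₂) = 0 := by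
      rw [dotProduct_comm]; exact dot_cross_self _ _
    have hne12 : mk ℂ (a • l.rep + c₁) (awc_ne_zero hind₁ a)
        ≠ mk ℂ (b • l.rep + c₂) (awc_ne_zero hind₂ b) := by
      intro h
      rw [mk_eq_mk_iff] at h
      obtain ⟨t, ht⟩ := h
      rw [Units.smul_def] at ht
      have := (linearIndependent_fin2.1 hindep12).2 (t : ℂ)
      simp only [Matrix.cons_val_zero, Matrix.cons_val_one, Matrix.head_cons] at this
      exact this ht
    have hcrossx : crossing L (mk ℂ _ hx0) := by
      show 2 ≤ mult L (mk ℂ _ hx0)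
      show 1 < ({l' ∈ L | incid (mk ℂ _ hx0) l'}).ncard
      rw [Set.one_lt_ncard (hfin.subset (Set.sep_subset _ _))]
      refine ⟨mk ℂ (a • l.rep + c₁) (awc_ne_zero hind₁ a),
        ⟨hl₁L, (incid_mk hx0 _).2 hxs₁⟩,
        mk ℂ (b • l.rep + c₂) (awc_ne_zero hind₂ b),
        ⟨hl₂L, (incid_mk hx0 _).2 hxs₂⟩, hne12⟩
    have hxr : mk ℂ _ hx0 ≠ r := by
      intro h
      obtain ⟨t, ht⟩ := exists_smul_eq_mk_rep ℂ _ hx0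
      rw [h] at ht
      have hr1 : r.rep ⬝ᵥ (a • l.rep + c₁) = 0 := by
        rw [← ht, Units.smul_def, smul_dotProduct, hxs₁, smul_zero]
      have hr2 : (a • l.rep + c₁) ⬝ᵥ q.rep = 0 := by
        have h' : (a • l.rep + c₁) ⬝ᵥ r.rep = 0 := by rw [dotProduct_comm]; exact hr1
        rw [hαβ, dotProduct_add, dotProduct_smul, dotProduct_smul, hs₁u, smul_zero,
          zero_add, smul_eq_mul] at h'
        exact (mul_eq_zero.1 h').resolve_left hβ0
      obtain ⟨t', ht'⟩ := subw _ hs₁u hr2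
      exact hs₁w t' ht'
    obtain ⟨l₃, hl₃L, hrl₃, hxl₃⟩ := hr.2 (mk ℂ _ hx0) hcrossx hxr
    have hl₃l : l₃ ≠ l := by
      intro hll
      rw [hll] at hxl₃
      have h1 : crossProduct (a • l.rep + c₁) (b • l.rep + c₂) ⬝ᵥ l.rep = 0 :=
        (incid_mk_left hx0 l).1 hxl₃
      have hindws₁ : LinearIndependent ℂ ![l.rep, a • l.rep + c₁] := indep_w_awc hind₁ a
      obtain ⟨k₂, hk₂⟩ := eq_smul_cross_of_dot hindws₁ h1 hxs₁
      have hpu1 : p.rep ⬝ᵥ (a • l.rep + c₁) = 0 := by rw [dotProduct_comm]; exact hs₁u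
      obtain ⟨k₃, hk₃⟩ := eq_smul_cross_of_dot hindws₁ duw hpu1
      have hk₃0 : k₃ ≠ 0 := by
        rintro rfl; rw [zero_smul] at hk₃; exact p.rep_nonzero hk₃
      have hxp : crossProduct (a • l.rep + c₁) (b • l.rep + c₂)
          = (k₂ * k₃⁻¹) • p.rep := by
        rw [hk₂, hk₃, smul_smul]
        congr 1
        field_simp
      have hk₂0 : k₂ * k₃⁻¹ ≠ 0 := by
        intro h'
        rw [hxp, h', zero_smul] at hx0
        exact hx0 rfl
      have hps₂ : p.rep ⬝ᵥ (b • l.rep + c₂) = 0 := by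
        have := hxs₂
        rw [hxp, smul_dotProduct, smul_eq_mul, mul_eq_zero] at this
        exact this.resolve_left hk₂0
      have hs₂u : (b • l.rep + c₂) ⬝ᵥ p.rep = 0 := by rw [dotProduct_comm]; exact hps₂
      obtain ⟨t', ht'⟩ := subw _ hs₂u hs₂v
      exact hs₂w t' ht'
    obtain ⟨c, hc⟩ := pencil_surj hrl hc₃r hind₃ hrl₃ hl₃l
    refine ⟨c, ?_, ?_⟩
    · show mk ℂ (c • l.rep + c₃) (awc_ne_zero hind₃ c) ∈ L
      rw [hc]; exact hl₃L
    · have hxc : incid (mk ℂ _ hx0) (mk ℂ (c • l.rep + c₃) (awc_ne_zero hind₃ c)) := by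
        rw [hc]; exact hxl₃
      rw [incid_mk hx0 (awc_ne_zero hind₃ c)] at hxc
      rw [← expand_key]
      exact hxc
  -- transfer to finsets and apply Cauchy–Davenport
  set D₁ := crossProduct l.rep c₂ ⬝ᵥ c₃ with hD₁def
  set D₂ := crossProduct c₁ l.rep ⬝ᵥ c₃ with hD₂def
  set D₃ := crossProduct c₁ c₂ ⬝ᵥ l.rep with hD₃def
  set K₀ := crossProduct c₁ c₂ ⬝ᵥ c₃ with hK₀def
  set A₂ := hAfin.toFinset.image (fun a => a * D₁) with hA₂def
  set B₂ := hBfin.toFinset.image (fun b => b * D₂) with hB₂def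
  set C₂ := hCfin.toFinset.image (fun c => -K₀ - c * D₃) with hC₂def
  have hAcard' : hAfin.toFinset.card = m - 1 := by
    rw [← Set.ncard_eq_toFinset_card _ hAfin]; omega
  have hBcard' : hBfin.toFinset.card = m - 1 := by
    rw [← Set.ncard_eq_toFinset_card _ hBfin]; omega
  have hCcard' : hCfin.toFinset.card = m - 1 := by
    rw [← Set.ncard_eq_toFinset_card _ hCfin]; omega
  have hA₂card : A₂.card = m - 1 := by
    rw [hA₂def, Finset.card_image_of_injective _ (mul_left_injective₀ hD₁), hAcard']
  have hB₂card : B₂.card = m - 1 := by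
    rw [hB₂def, Finset.card_image_of_injective _ (mul_left_injective₀ hD₂), hBcard']
  have hC₂card : C₂.card = m - 1 := by
    have hinj : Function.Injective (fun c : ℂ => -K₀ - c * D₃) := by
      intro x y h
      simp only at h
      have : x * D₃ = y * D₃ := by linear_combination -h
      exact mul_left_injective₀ hD₃ this
    rw [hC₂def, Finset.card_image_of_injective _ hinj, hCcard']
  have hA₂ne : A₂.Nonempty := by
    rw [← Finset.card_pos, hA₂card]; omega
  have hB₂ne : B₂.Nonempty := by
    rw [← Finset.card_pos, hB₂card]; omega
  have hsub : A₂ + B₂ ⊆ C₂ := by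
    intro z hz
    rw [Finset.mem_add] at hz
    obtain ⟨x', hx', y', hy', rfl⟩ := hz
    rw [hA₂def, Finset.mem_image] at hx'
    rw [hB₂def, Finset.mem_image] at hy'
    obtain ⟨a, haA', rfl⟩ := hx'
    obtain ⟨b, hbB', rfl⟩ := hy'
    obtain ⟨c, hcC, hceq⟩ := key a (hAfin.mem_toFinset.1 haA') b (hBfin.mem_toFinset.1 hbB')
    rw [hC₂def, Finset.mem_image]
    refine ⟨c, hCfin.mem_toFinset.2 hcC, ?_⟩
    show -K₀ - c * D₃ = a * D₁ + b * D₂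
    linear_combination -hceq
  have hCD := cauchy_davenport_of_isAddTorsionFree hA₂ne hB₂ne
  have hle := Finset.card_le_card hsub
  have := le_trans hCD hle
  rw [hA₂card, hB₂card, hC₂card] at this
  omega
end

section
/- Let p be a modular point of multiplicity m in a non-pencil real supersolvable line arrangement L. Then every line of L not passing through p contains a crossing point of multiplicity 2. -/
open Projectivization Matrix

section helpers

local notation "V3" => Fin 3 → ℝ

lemma exists_smul_of_cross_eq_zero {a b : V3} (hb : b ≠ 0) (h : crossProduct a b = 0) :
    ∃ t : ℝ, a = t • b := by
  by_cases ha : a = 0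
  · exact ⟨0, by simp [ha]⟩
  · have := (not_iff_not.2 (crossProduct_ne_zero_iff_linearIndependent (v := a) (w := b))).1
      (by simpa using h)
    rw [LinearIndependent.pair_iff' ha] at this
    push_neg at this
    obtain ⟨c, hc⟩ := this
    have hc0 : c ≠ 0 := by rintro rfl; simp [hc.symm] at hb
    exact ⟨c⁻¹, by rw [← hc, smul_smul, inv_mul_cancel₀ hc0, one_smul]⟩

lemma bac_cab (u v w : V3) :
    crossProduct u (crossProduct v w) = (u ⬝ᵥ w) • v - (u ⬝ᵥ v) • w := by
  ext i
  fin_cases i <;>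
    simp [cross_apply, dotProduct, Fin.sum_univ_three, Pi.sub_apply, Pi.smul_apply] <;> ring

lemma exists_smul_of_perp_perp {x v w : V3} (h1 : x ⬝ᵥ v = 0) (h2 : x ⬝ᵥ w = 0)
    (h : crossProduct v w ≠ 0) : ∃ t : ℝ, x = t • crossProduct v w := by
  apply exists_smul_of_cross_eq_zero h
  rw [bac_cab, h1, h2]
  simp

lemma self_dot_eq_zero {v : V3} (h : v ⬝ᵥ v = 0) : v = 0 := by
  ext i
  have := dotProduct_self_eq_zero.mp h
  exact congrFun this i

lemma rep_mk_eq (v : V3) (hv : v ≠ 0) : ∃ c : ℝ, c ≠ 0 ∧ (mk ℝ v hv).rep = c • v := by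
  have h := (mk ℝ v hv).mk_rep
  rw [mk_eq_mk_iff'] at h
  obtain ⟨a, ha⟩ := h
  refine ⟨a, ?_, ha.symm⟩
  rintro rfl
  have := (mk ℝ v hv).rep_nonzero
  simp [← ha] at this

lemma incid_mk_left {v : V3} (hv : v ≠ 0) (g : PP ℝ) :
    incid (mk ℝ v hv) g ↔ v ⬝ᵥ g.rep = 0 := by
  obtain ⟨c, hc, h⟩ := rep_mk_eq v hv
  unfold incid
  rw [h, smul_dotProduct]
  simp [hc]

lemma mk_eq_self_iff {x : PP ℝ} {v : V3} (hv : v ≠ 0) :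
    mk ℝ v hv = x ↔ ∃ c : ℝ, c ≠ 0 ∧ x.rep = c • v := by
  constructor
  · rintro rfl; exact rep_mk_eq v hv
  · rintro ⟨c, hc, h⟩
    rw [← x.mk_rep]
    rw [mk_eq_mk_iff']
    refine ⟨c⁻¹, ?_⟩
    rw [h, smul_smul, inv_mul_cancel₀ hc, one_smul]

lemma cross_rep_ne_zero {g g' : PP ℝ} (h : g ≠ g') : crossProduct g.rep g'.rep ≠ 0 := by
  intro hc
  obtain ⟨t, ht⟩ := exists_smul_of_cross_eq_zero g'.rep_nonzero hc
  apply h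
  rw [← g.mk_rep, ← g'.mk_rep, mk_eq_mk_iff']
  exact ⟨t, ht.symm⟩

/-- Two points on two distinct lines coincide. -/
lemma point_unique_s11 {x y g g' : PP ℝ} (hgg' : g ≠ g') (hx : incid x g) (hx' : incid x g')
    (hy : incid y g) (hy' : incid y g') : x = y := by
  obtain ⟨t, ht⟩ := exists_smul_of_perp_perp hx hx' (cross_rep_ne_zero hgg')
  obtain ⟨s, hs⟩ := exists_smul_of_perp_perp hy hy' (cross_rep_ne_zero hgg')
  have ht0 : t ≠ 0 := by rintro rfl; exact x.rep_nonzero (by simp [ht])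
  have hs0 : s ≠ 0 := by rintro rfl; exact y.rep_nonzero (by simp [hs])
  rw [← x.mk_rep, ← y.mk_rep, mk_eq_mk_iff']
  exact ⟨t / s, by rw [ht, hs, smul_smul, div_mul_cancel₀ _ hs0]⟩

lemma incid_swap {x g : PP ℝ} : incid x g ↔ g.rep ⬝ᵥ x.rep = 0 := by
  unfold incid; rw [dotProduct_comm]

/-- Two lines through two distinct points coincide. -/
lemma line_unique {x y g g' : PP ℝ} (hxy : x ≠ y) (hx : incid x g) (hx' : incid x g')
    (hy : incid y g) (hy' : incid y g') : g = g' := by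
  refine point_unique_s11 (g := x) (g' := y) hxy ?_ ?_ ?_ ?_ <;> rw [incid_swap] <;>
    [exact hx; exact hy; exact hx'; exact hy']

noncomputable def meet (g g' : PP ℝ) (h : g ≠ g') : PP ℝ :=
  mk ℝ (crossProduct g.rep g'.rep) (cross_rep_ne_zero h)

lemma meet_incid_left (g g' : PP ℝ) (h : g ≠ g') : incid (meet g g' h) g := by
  rw [meet, incid_mk_left]
  rw [dotProduct_comm]
  exact dot_self_cross _ _

lemma meet_incid_right (g g' : PP ℝ) (h : g ≠ g') : incid (meet g g' h) g' := by
  rw [meet, incid_mk_left]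
  rw [dotProduct_comm]
  exact dot_cross_self _ _

end helpers

lemma key_sign {ι : Type*} (S : Set ι) (hS : S.Finite) (a u : ι → ℝ)
    (hrel : ∀ g ∈ S, ∀ g' ∈ S, a g ≠ a g' →
      ∃ t ∈ S, 0 < u g * u g' * ((a t - a g) * (a t - a g'))) :
    ∀ g ∈ S, ∀ g' ∈ S, a g ≠ a g' → 0 < u g * u g' := by
  have H : ∀ n : ℕ, ∀ g ∈ S, ∀ g' ∈ S, a g < a g' →
      ({x ∈ S | a g < a x ∧ a x < a g'}).ncard < n → 0 < u g * u g' := by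
    intro n
    induction n with
    | zero => intro g hg g' hg' _ hcard; omega
    | succ n ih =>
      intro g hg g' hg' hlt hcard
      obtain ⟨t, ht, hpos⟩ := hrel g hg g' hg' hlt.ne
      rcases lt_trichotomy ((a t - a g) * (a t - a g')) 0 with hneg | hzero | hposc
      · -- t strictly between
        exfalso
        have htg : a g < a t := by
          by_contra hh; push_neg at hh; nlinarith [mul_nonneg (sub_nonneg.2 hh) (sub_nonneg.2 (le_of_lt (lt_of_le_of_lt hh hlt)))]
        have htg' : a t < a g' := by
          by_contra hh; push_neg at hh; nlinarith [mul_nonneg (sub_nonneg.2 (le_of_lt (lt_of_lt_of_le hlt hh))) (sub_nonneg.2 hh)]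
        have hbigfin : ({x ∈ S | a g < a x ∧ a x < a g'}).Finite := hS.subset (Set.sep_subset _ _)
        have hcard' : ({x ∈ S | a g < a x ∧ a x < a g'}).ncard ≤ n := by omega
        have hsub1 : {x ∈ S | a g < a x ∧ a x < a t} ⊂ {x ∈ S | a g < a x ∧ a x < a g'} := by
          rw [Set.ssubset_iff_of_subset]
          · exact ⟨t, ⟨ht, htg, htg'⟩, fun hmem => lt_irrefl _ hmem.2.2⟩
          · rintro x ⟨hx, h1, h2⟩; exact ⟨hx, h1, h2.trans htg'⟩
        have hsub2 : {x ∈ S | a t < a x ∧ a x < a g'} ⊂ {x ∈ S | a g < a x ∧ a x < a g'} := by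
          rw [Set.ssubset_iff_of_subset]
          · exact ⟨t, ⟨ht, htg, htg'⟩, fun hmem => lt_irrefl _ hmem.2.1⟩
          · rintro x ⟨hx, h1, h2⟩; exact ⟨hx, htg.trans h1, h2⟩
        have h1 := ih g hg t ht htg (lt_of_lt_of_le (Set.ncard_lt_ncard hsub1 hbigfin) hcard')
        have h2 := ih t ht g' hg' htg' (lt_of_lt_of_le (Set.ncard_lt_ncard hsub2 hbigfin) hcard')
        nlinarith [mul_pos h1 h2, sq_nonneg (u t)]
      · rw [hzero, mul_zero] at hpos; exact absurd hpos (lt_irrefl 0)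
      · nlinarith
  intro g hg g' hg' hne
  rcases hne.lt_or_gt with h | h
  · exact H _ g hg g' hg' h (Nat.lt_succ_self _)
  · have := H _ g' hg' g hg h (Nat.lt_succ_self _); nlinarith

section chart

local notation "V3" => Fin 3 → ℝ

lemma crossing_of_pair {L : Set (PP ℝ)} (hfin : L.Finite) {x g g' : PP ℝ} (hg : g ∈ L)
    (hg' : g' ∈ L) (hne : g ≠ g') (h1 : incid x g) (h2 : incid x g') : crossing L x := by
  have hsub : {g, g'} ⊆ {l ∈ L | incid x l} := by
    rintro y (rfl | rfl) <;> exact ⟨by assumption, by assumption⟩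
  have := Set.ncard_le_ncard hsub (hfin.subset (Set.sep_subset _ _))
  rwa [Set.ncard_pair hne] at this

lemma crossing_finite {L : Set (PP ℝ)} (hfin : L.Finite) : {q | crossing L q}.Finite := by
  have hsub : {q | crossing L q} ⊆ ⋃ g ∈ L, ⋃ g' ∈ L, {q | g ≠ g' ∧ incid q g ∧ incid q g'} := by
    intro q hq
    have h2 : 1 < ({l ∈ L | incid q l}).ncard := hq
    obtain ⟨g, g', hg, hg', hne⟩ := (Set.one_lt_ncard_iff (hfin.subset (Set.sep_subset _ _))).1 h2
    simp only [Set.mem_iUnion]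
    exact ⟨g, hg.1, g', hg'.1, hne, hg.2, hg'.2⟩
  apply Set.Finite.subset _ hsub
  apply hfin.biUnion; intro g _
  apply hfin.biUnion; intro g' _
  by_cases h : g = g'
  · apply Set.Finite.subset (Set.finite_empty); rintro q ⟨hne, _⟩; exact hne h
  · apply Set.Subsingleton.finite
    rintro x ⟨_, hx1, hx2⟩ y ⟨_, hy1, hy2⟩
    exact point_unique_s11 h hx1 hx2 hy1 hy2

lemma self_dot_smul_zero {a b : Fin 3 → ℝ} {t : ℝ} (h : a = t • b) (hab : a ⬝ᵥ b = 0) :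
    a = 0 := by
  apply self_dot_eq_zero
  calc a ⬝ᵥ a = a ⬝ᵥ (t • b) := by rw [← h]
    _ = t * (a ⬝ᵥ b) := by rw [dotProduct_smul]; simp
    _ = 0 := by rw [hab, mul_zero]

lemma exists_pi {L : Set (PP ℝ)} (hfin : L.Finite) (p : PP ℝ) :
    ∃ π : V3, π ≠ 0 ∧ p.rep ⬝ᵥ π = 0 ∧ ∀ q, crossing L q → q ≠ p → q.rep ⬝ᵥ π ≠ 0 := by
  have hvp0 : p.rep ≠ 0 := p.rep_nonzero
  have hw : ∃ w : V3, crossProduct p.rep w ≠ 0 := by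
    by_contra hcon
    push_neg at hcon
    obtain ⟨t0, ht0⟩ := exists_smul_of_cross_eq_zero (b := fun i => if i = 0 then (1:ℝ) else 0)
      (by intro h; simpa using congrFun h 0) (hcon _)
    obtain ⟨t1, ht1⟩ := exists_smul_of_cross_eq_zero (b := fun i => if i = 1 then (1:ℝ) else 0)
      (by intro h; simpa using congrFun h 1) (hcon _)
    apply hvp0
    funext i
    have h0 := congrFun ht0 1
    have h0' := congrFun ht0 2
    have h1 := congrFun ht1 0
    simp only [Pi.smul_apply, smul_eq_mul] at h0 h0' h1
    norm_num at h0 h0' h1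
    fin_cases i <;> simp [h0, h0', h1]
  obtain ⟨w, hw⟩ := hw
  set c1 := crossProduct p.rep w with hc1def
  have hc1p : p.rep ⬝ᵥ c1 = 0 := dot_self_cross _ _
  set c2 := crossProduct p.rep c1 with hc2def
  have hc2p : p.rep ⬝ᵥ c2 = 0 := dot_self_cross _ _
  have hc12 : c1 ⬝ᵥ c2 = 0 := dot_cross_self _ _
  have hc2 : c2 ≠ 0 := by
    intro h
    obtain ⟨t, ht⟩ := exists_smul_of_cross_eq_zero hw h
    exact hvp0 (self_dot_smul_zero ht hc1p)
  have hcc : crossProduct c1 c2 ≠ 0 := by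
    intro h
    obtain ⟨t, ht⟩ := exists_smul_of_cross_eq_zero hc2 h
    exact hw (self_dot_smul_zero ht hc12)
  have hbad : ∀ q : PP ℝ, crossing L q → q ≠ p →
      {t : ℝ | q.rep ⬝ᵥ (c1 + t • c2) = 0}.Finite := by
    intro q hq hqp
    have hnb : ¬ (q.rep ⬝ᵥ c1 = 0 ∧ q.rep ⬝ᵥ c2 = 0) := by
      rintro ⟨h1, h2⟩
      obtain ⟨t, ht⟩ := exists_smul_of_perp_perp h1 h2 hcc
      obtain ⟨s, hs⟩ := exists_smul_of_perp_perp hc1p hc2p hcc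
      have hs0 : s ≠ 0 := by rintro rfl; exact hvp0 (by simp [hs])
      have ht0 : t ≠ 0 := by rintro rfl; exact q.rep_nonzero (by simp [ht])
      apply hqp
      rw [← q.mk_rep, ← p.mk_rep, mk_eq_mk_iff']
      refine ⟨t / s, ?_⟩
      rw [ht, hs, smul_smul, div_mul_cancel₀ _ hs0]
    have hexp : ∀ t : ℝ, q.rep ⬝ᵥ (c1 + t • c2) = q.rep ⬝ᵥ c1 + t * (q.rep ⬝ᵥ c2) := by
      intro t
      rw [dotProduct_add, dotProduct_smul]
      simp
    by_cases hb : q.rep ⬝ᵥ c2 = 0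
    · have ha : q.rep ⬝ᵥ c1 ≠ 0 := fun h => hnb ⟨h, hb⟩
      apply Set.Finite.subset (Set.finite_empty)
      intro t ht
      rw [Set.mem_setOf_eq, hexp, hb, mul_zero, add_zero] at ht
      exact absurd ht ha
    · apply Set.Finite.subset (Set.finite_singleton (-(q.rep ⬝ᵥ c1) / (q.rep ⬝ᵥ c2)))
      intro t ht
      rw [Set.mem_setOf_eq, hexp] at ht
      rw [Set.mem_singleton_iff, eq_div_iff hb]
      linarith
  have hBad : (⋃ q ∈ {q | crossing L q ∧ q ≠ p}, {t : ℝ | q.rep ⬝ᵥ (c1 + t • c2) = 0}).Finite := by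
    apply Set.Finite.biUnion
    · exact Set.Finite.subset (crossing_finite hfin) (fun q hq => hq.1)
    · exact fun q hq => hbad q hq.1 hq.2
  obtain ⟨t, ht⟩ := (hBad.infinite_compl).nonempty
  refine ⟨c1 + t • c2, ?_, ?_, ?_⟩
  · intro h
    have h1 : c1 = (-t) • c2 := by rw [neg_smul, ← sub_eq_zero, sub_neg_eq_add]; exact h
    exact hw (self_dot_smul_zero h1 hc12)
  · rw [dotProduct_add, dotProduct_smul, hc1p, hc2p]; simp
  · intro q hq hqp heq
    exact ht (Set.mem_biUnion (show q ∈ {q | crossing L q ∧ q ≠ p} from ⟨hq, hqp⟩) heq)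

end chart

section chart2

local notation "V3" => Fin 3 → ℝ

lemma smul_dot_simp (t : ℝ) (a b : Fin 3 → ℝ) : (t • a) ⬝ᵥ b = t * (a ⬝ᵥ b) := by
  rw [smul_dotProduct]; simp

lemma dot_smul_simp (t : ℝ) (a b : Fin 3 → ℝ) : a ⬝ᵥ (t • b) = t * (a ⬝ᵥ b) := by
  rw [dotProduct_smul]; simp

lemma exists_chart (vp lam π : V3) (hvp : vp ≠ 0) (hplam : vp ⬝ᵥ lam ≠ 0)
    (hπ0 : π ≠ 0) (hπp : vp ⬝ᵥ π = 0) :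
    ∃ μ : V3, μ ≠ 0 ∧ vp ⬝ᵥ μ = 0 ∧ π ⬝ᵥ μ = 0 ∧
      (∀ z, z ⬝ᵥ lam = 0 → z ⬝ᵥ π = 0 → z ⬝ᵥ μ = 0 → z = 0) ∧
      (∀ w : V3, ∃ r s t : ℝ, w = r • lam + s • π + t • μ) := by
  have hμp : vp ⬝ᵥ crossProduct vp π = 0 := dot_self_cross _ _
  have hπμ : π ⬝ᵥ crossProduct vp π = 0 := dot_cross_self _ _
  have hμ0 : crossProduct vp π ≠ 0 := by
    intro h
    obtain ⟨t, ht⟩ := exists_smul_of_cross_eq_zero hπ0 h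
    exact hvp (self_dot_smul_zero ht hπp)
  set μ := crossProduct vp π with hμdef
  clear_value μ
  have hcc : crossProduct π μ ≠ 0 := by
    intro h
    obtain ⟨t, ht⟩ := exists_smul_of_cross_eq_zero hμ0 h
    exact hπ0 (self_dot_smul_zero ht hπμ)
  have hπn : π ⬝ᵥ crossProduct π μ = 0 := dot_self_cross _ _
  have hμn : μ ⬝ᵥ crossProduct π μ = 0 := dot_cross_self _ _
  set n := crossProduct π μ with hndef
  clear_value n
  obtain ⟨s0, hs0⟩ := exists_smul_of_perp_perp hπp hμp (hndef ▸ hcc)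
  rw [← hndef] at hs0
  have hs00 : s0 ≠ 0 := by rintro rfl; exact hvp (by simp [hs0])
  have hlamn : lam ⬝ᵥ n ≠ 0 := by
    intro h
    apply hplam
    rw [hs0, smul_dot_simp, dotProduct_comm, h, mul_zero]
  have hnlam : n ⬝ᵥ lam ≠ 0 := by rwa [dotProduct_comm]
  refine ⟨μ, hμ0, hμp, hπμ, ?_, ?_⟩
  · intro z hz1 hz2 hz3
    obtain ⟨t0, ht0⟩ := exists_smul_of_perp_perp hz2 hz3 (hndef ▸ hcc)
    rw [← hndef] at ht0
    have h3 : t0 * (n ⬝ᵥ lam) = 0 := by rw [← smul_dot_simp, ← ht0]; exact hz1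
    rcases mul_eq_zero.mp h3 with h | h
    · rw [ht0, h, zero_smul]
    · exact absurd h hnlam
  · intro w
    have hππ : π ⬝ᵥ π ≠ 0 := fun h => hπ0 (self_dot_eq_zero h)
    have hμμ : μ ⬝ᵥ μ ≠ 0 := fun h => hμ0 (self_dot_eq_zero h)
    have hnn : n ⬝ᵥ n ≠ 0 := fun h => (hndef ▸ hcc) (self_dot_eq_zero (hndef ▸ h))
    have hμπ : μ ⬝ᵥ π = 0 := by rw [dotProduct_comm]; exact hπμ
    obtain ⟨r, s, t, hz0⟩ :
        ∃ r s t : ℝ, w - r • lam - s • π - t • μ = 0 := by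
      refine ⟨(w ⬝ᵥ n) / (lam ⬝ᵥ n), ((w - ((w ⬝ᵥ n) / (lam ⬝ᵥ n)) • lam) ⬝ᵥ π) / (π ⬝ᵥ π),
        ((w - ((w ⬝ᵥ n) / (lam ⬝ᵥ n)) • lam) ⬝ᵥ μ) / (μ ⬝ᵥ μ), ?_⟩
      set r := (w ⬝ᵥ n) / (lam ⬝ᵥ n) with hrdef
      set w' := w - r • lam with hw'def
      have hw'n : w' ⬝ᵥ n = 0 := by
        rw [hw'def, sub_dotProduct, smul_dot_simp, hrdef, div_mul_cancel₀ _ hlamn,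
          sub_self]
      set s := (w' ⬝ᵥ π) / (π ⬝ᵥ π) with hsdef
      set t := (w' ⬝ᵥ μ) / (μ ⬝ᵥ μ) with htdef
      have hzπ : (w' - s • π - t • μ) ⬝ᵥ π = 0 := by
        rw [sub_dotProduct, sub_dotProduct, smul_dot_simp, smul_dot_simp,
          hμπ, mul_zero, sub_zero, hsdef, div_mul_cancel₀ _ hππ, sub_self]
      have hzμ : (w' - s • π - t • μ) ⬝ᵥ μ = 0 := by
        rw [sub_dotProduct, sub_dotProduct, smul_dot_simp, smul_dot_simp,
          hπμ, mul_zero, sub_zero, htdef, div_mul_cancel₀ _ hμμ, sub_self]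
      have hzn : (w' - s • π - t • μ) ⬝ᵥ n = 0 := by
        rw [sub_dotProduct, sub_dotProduct, smul_dot_simp, smul_dot_simp,
          hw'n, hπn, hμn, mul_zero, mul_zero, sub_zero, sub_zero]
      obtain ⟨t1, ht1⟩ := exists_smul_of_perp_perp hzπ hzμ (hndef ▸ hcc)
      rw [← hndef] at ht1
      have h3 : t1 * (n ⬝ᵥ n) = 0 := by rw [← smul_dot_simp, ← ht1]; exact hzn
      have ht10 : t1 = 0 := by
        rcases mul_eq_zero.mp h3 with h | h
        · exact h
        · exact absurd h hnn
      rw [ht10, zero_smul] at ht1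
      rw [hw'def] at ht1
      exact ht1
    refine ⟨r, s, t, ?_⟩
    funext i
    have := congrFun hz0 i
    simp only [Pi.sub_apply, Pi.add_apply, Pi.smul_apply, smul_eq_mul, Pi.zero_apply] at this ⊢
    linarith

end chart2

lemma slope_calc {A B C r s t : ℝ} (hB : B ≠ 0) (hr : r ≠ 0)
    (h1 : 0 = r * A + s * B + t * C) : A / B = -t / r * (C / B) + -s / r := by
  field_simp
  linear_combination -h1


/-- in a non-pencil real supersolvable arrangement with modular
point p of multiplicity m, every line not through p contains a crossing point
of multiplicity 2. -/
theorem line_avoiding_modular_point_has_double_point (L : Set (PP ℝ))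
    (hfin : L.Finite) (hnp : ¬ isPencil L) (p : PP ℝ) (m : ℕ)
    (hp : modular L p) (hpm : mult L p = m) :
    ∀ l ∈ L, ¬ incid p l → ∃ q : PP ℝ, incid q l ∧ mult L q = 2 := by
  intro l hlL hpl
  by_contra hcon
  push_neg at hcon
  have hplam : p.rep ⬝ᵥ l.rep ≠ 0 := hpl
  obtain ⟨π, hπ0, hπp, hπq⟩ := exists_pi hfin p
  obtain ⟨μ, hμ0, hμp, hπμ, span3, decomp⟩ :=
    exists_chart p.rep l.rep π p.rep_nonzero hplam hπ0 hπp
  set X : PP ℝ → ℝ := fun x => (x.rep ⬝ᵥ μ) / (x.rep ⬝ᵥ π) with hXdef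
  set Y : PP ℝ → ℝ := fun x => (x.rep ⬝ᵥ l.rep) / (x.rep ⬝ᵥ π) with hYdef
  have dot_decomp : ∀ (x w : Fin 3 → ℝ) (r s t : ℝ), w = r • l.rep + s • π + t • μ →
      x ⬝ᵥ w = r * (x ⬝ᵥ l.rep) + s * (x ⬝ᵥ π) + t * (x ⬝ᵥ μ) := by
    intro x w r s t h
    rw [h, dotProduct_add, dotProduct_add, dot_smul_simp, dot_smul_simp,
      dot_smul_simp]
  -- F1
  have hY0 : ∀ x : PP ℝ, x.rep ⬝ᵥ π ≠ 0 → (incid x l ↔ Y x = 0) := by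
    intro x hx
    rw [hYdef]
    simp only []
    rw [div_eq_zero_iff]
    constructor
    · intro h; exact Or.inl h
    · rintro (h | h)
      · exact h
      · exact absurd h hx
  -- F2
  have hXinj : ∀ x y : PP ℝ, x.rep ⬝ᵥ π ≠ 0 → y.rep ⬝ᵥ π ≠ 0 → incid x l → incid y l →
      X x = X y → x = y := by
    intro x y hx hy hxl hyl hXY
    have hz : (y.rep ⬝ᵥ π) • x.rep - (x.rep ⬝ᵥ π) • y.rep = 0 := by
      apply span3
      · rw [sub_dotProduct, smul_dot_simp, smul_dot_simp, hxl, hyl]; ring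
      · rw [sub_dotProduct, smul_dot_simp, smul_dot_simp]; ring
      · rw [sub_dotProduct, smul_dot_simp, smul_dot_simp]
        have := (div_eq_div_iff hx hy).1 hXY
        linarith
    rw [← x.mk_rep, ← y.mk_rep, mk_eq_mk_iff']
    refine ⟨(x.rep ⬝ᵥ π) / (y.rep ⬝ᵥ π), ?_⟩
    funext i
    have h5 := congrFun hz i
    simp only [Pi.sub_apply, Pi.smul_apply, smul_eq_mul, Pi.zero_apply] at h5 ⊢
    rw [div_mul_eq_mul_div, div_eq_iff hy]
    linarith
  -- F3
  have hvert : ∀ g : PP ℝ, incid p g → ∀ x y : PP ℝ, x.rep ⬝ᵥ π ≠ 0 → y.rep ⬝ᵥ π ≠ 0 →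
      incid x g → incid y g → X x = X y := by
    intro g hpg x y hx hy hxg hyg
    obtain ⟨r, s, t, hdec⟩ := decomp g.rep
    have hr : r = 0 := by
      have h1 := dot_decomp p.rep g.rep r s t hdec
      rw [hpg] at h1
      rw [hπp, hμp] at h1
      have : r * (p.rep ⬝ᵥ l.rep) = 0 := by linarith
      rcases mul_eq_zero.mp this with h | h
      · exact h
      · exact absurd h hplam
    have ht : t ≠ 0 := by
      intro ht0
      apply g.rep_nonzero
      rw [hdec, hr, ht0, zero_smul, zero_smul, zero_add, add_zero]
      have h1 := dot_decomp x.rep g.rep r s t hdec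
      rw [hxg, hr, ht0] at h1
      have hs : s = 0 := by
        have : s * (x.rep ⬝ᵥ π) = 0 := by linarith
        rcases mul_eq_zero.mp this with h | h
        · exact h
        · exact absurd h hx
      rw [hs, zero_smul]
    have hXc : ∀ z : PP ℝ, z.rep ⬝ᵥ π ≠ 0 → incid z g → X z = -s / t := by
      intro z hz hzg
      have h1 := dot_decomp z.rep g.rep r s t hdec
      rw [hzg, hr] at h1
      rw [hXdef]
      simp only []
      rw [div_eq_div_iff hz ht]
      linarith
    rw [hXc x hx hxg, hXc y hy hyg]
  -- F4: nonvertical lines have nonzero slope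
  have hslope : ∀ h : PP ℝ, h ∈ L → h ≠ l → ¬ incid p h → ∃ uu cc : ℝ, uu ≠ 0 ∧
      ∀ x : PP ℝ, x.rep ⬝ᵥ π ≠ 0 → incid x h → Y x = uu * X x + cc := by
    intro h hhL hhl hph
    obtain ⟨r, s, t, hdec⟩ := decomp h.rep
    have hr : r ≠ 0 := by
      intro hr0
      apply hph
      have h1 := dot_decomp p.rep h.rep r s t hdec
      rw [hr0, hπp, hμp] at h1
      show p.rep ⬝ᵥ h.rep = 0
      rw [h1]; ring
    have ht : t ≠ 0 := by
      intro ht0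
      have hs : s ≠ 0 := by
        intro hs0
        apply hhl
        have hmk : mk ℝ l.rep l.rep_nonzero = h := by
          apply (mk_eq_self_iff l.rep_nonzero).2
          exact ⟨r, hr, by rw [hdec, hs0, ht0, zero_smul, zero_smul, add_zero, add_zero]⟩
        exact hmk.symm.trans l.mk_rep
      have hlh : l ≠ h := Ne.symm hhl
      have ho1 : incid (meet l h hlh) l := meet_incid_left l h hlh
      have ho2 : incid (meet l h hlh) h := meet_incid_right l h hlh
      have hop : meet l h hlh ≠ p := fun he => hpl (he ▸ ho1)
      have hoc : crossing L (meet l h hlh) := crossing_of_pair hfin hlL hhL hlh ho1 ho2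
      have hoπ : (meet l h hlh).rep ⬝ᵥ π ≠ 0 := hπq _ hoc hop
      have h1 := dot_decomp (meet l h hlh).rep h.rep r s t hdec
      have ho2' : (meet l h hlh).rep ⬝ᵥ h.rep = 0 := ho2
      have ho1' : (meet l h hlh).rep ⬝ᵥ l.rep = 0 := ho1
      rw [ho2', ho1', ht0] at h1
      apply hoπ
      have : s * ((meet l h hlh).rep ⬝ᵥ π) = 0 := by linarith
      rcases mul_eq_zero.mp this with hbad | hgood
      · exact absurd hbad hs
      · exact hgood
    refine ⟨-t / r, -s / r, div_ne_zero (neg_ne_zero.2 ht) hr, ?_⟩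
    intro x hx hxh
    have h1 := dot_decomp x.rep h.rep r s t hdec
    have hxh' : x.rep ⬝ᵥ h.rep = 0 := hxh
    rw [hxh'] at h1
    show x.rep ⬝ᵥ l.rep / (x.rep ⬝ᵥ π) =
      -t / r * (x.rep ⬝ᵥ μ / (x.rep ⬝ᵥ π)) + -s / r
    exact slope_calc hx hr h1
  -- the pencil S of lines through p
  set S : Set (PP ℝ) := {g ∈ L | incid p g} with hSdef
  have hSfin : S.Finite := hfin.subset (Set.sep_subset _ _)
  have hS2 : 2 ≤ S.ncard := hp.1
  have hlS : l ∉ S := fun h => hpl h.2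
  -- the base points q g on l
  have hqex : ∀ g : PP ℝ, ∃ qq : PP ℝ, g ∈ S →
      incid qq g ∧ incid qq l ∧ qq.rep ⬝ᵥ π ≠ 0 ∧ qq ≠ p := by
    intro g
    by_cases hg : g ∈ S
    · have hgl : g ≠ l := fun h => hlS (h ▸ hg)
      have h1 := meet_incid_left g l hgl
      have h2 := meet_incid_right g l hgl
      have hqp : meet g l hgl ≠ p := fun h => hpl (h ▸ h2)
      have hcr : crossing L (meet g l hgl) := crossing_of_pair hfin hg.1 hlL hgl h1 h2
      exact ⟨meet g l hgl, fun _ => ⟨h1, h2, hπq _ hcr hqp, hqp⟩⟩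
    · exact ⟨p, fun h => absurd h hg⟩
  choose q hq using hqex
  set a : PP ℝ → ℝ := fun g => X (q g) with hadef
  -- injectivity of a on S
  have hainj : ∀ g ∈ S, ∀ g' ∈ S, a g = a g' → g = g' := by
    intro g hg g' hg' haa
    have h1 := hq g hg
    have h2 := hq g' hg'
    have hqq : q g = q g' := hXinj (q g) (q g') h1.2.2.1 h2.2.2.1 h1.2.1 h2.2.1 haa
    have hpq : q g ≠ p := h1.2.2.2
    exact line_unique hpq h1.1 (hqq ▸ h2.1) hg.2 hg'.2
  -- extra lines through each q g
  have hextex : ∀ g : PP ℝ, ∃ hh : PP ℝ, g ∈ S →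
      hh ∈ L ∧ incid (q g) hh ∧ hh ≠ l ∧ hh ≠ g := by
    intro g
    by_cases hg : g ∈ S
    · have h1 := hq g hg
      have hgl : g ≠ l := fun h => hlS (h ▸ hg)
      have h2 : 2 ≤ mult L (q g) := crossing_of_pair hfin hg.1 hlL hgl h1.1 h1.2.1
      have hne2 : mult L (q g) ≠ 2 := hcon (q g) h1.2.1
      have h3 : 3 ≤ ({t ∈ L | incid (q g) t}).ncard := by
        have : mult L (q g) = ({t ∈ L | incid (q g) t}).ncard := rfl
        omega
      have hnsub : ¬ ({t ∈ L | incid (q g) t} ⊆ {l, g}) := by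
        intro hsub
        have hcar := Set.ncard_le_ncard hsub (Set.toFinite _)
        have : ({l, g} : Set (PP ℝ)).ncard ≤ 2 := by
          apply le_trans (Set.ncard_insert_le _ _)
          rw [Set.ncard_singleton]
        omega
      obtain ⟨hh, hmem, hnot⟩ := Set.not_subset.mp hnsub
      simp only [Set.mem_insert_iff, Set.mem_singleton_iff, not_or] at hnot
      exact ⟨hh, fun _ => ⟨hmem.1, hmem.2, hnot.1, hnot.2⟩⟩
    · exact ⟨p, fun h => absurd h hg⟩
  choose E hE using hextex
  -- E g does not pass through p
  have hEp : ∀ g ∈ S, ¬ incid p (E g) := by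
    intro g hg hbad
    have h1 := hq g hg
    have h2 := hE g hg
    have hpq : p ≠ q g := Ne.symm h1.2.2.2
    exact h2.2.2.2 (line_unique hpq hbad hg.2 h2.2.1 h1.1)
  -- slopes of the extra lines
  have huex : ∀ g : PP ℝ, ∃ uu : ℝ, g ∈ S → (uu ≠ 0 ∧
      ∀ x : PP ℝ, x.rep ⬝ᵥ π ≠ 0 → incid x (E g) → Y x = uu * (X x - a g)) := by
    intro g
    by_cases hg : g ∈ S
    · have h1 := hq g hg
      have h2 := hE g hg
      obtain ⟨uu, cc, huu, hlin⟩ := hslope (E g) h2.1 h2.2.2.1 (hEp g hg)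
      have h0 : Y (q g) = 0 := (hY0 (q g) h1.2.2.1).1 h1.2.1
      have hq_on : Y (q g) = uu * X (q g) + cc := hlin (q g) h1.2.2.1 h2.2.1
      refine ⟨uu, fun _ => ⟨huu, fun x hx hxE => ?_⟩⟩
      have h3 := hlin x hx hxE
      have hXa : X (q g) = a g := rfl
      rw [hXa] at hq_on
      rw [h3]
      linarith [hq_on, h0]
    · exact ⟨1, fun h => absurd h hg⟩
  choose u hu using huex
  -- the key relation
  have hrel : ∀ g ∈ S, ∀ g' ∈ S, a g ≠ a g' →
      ∃ tt ∈ S, 0 < u g * u g' * ((a tt - a g) * (a tt - a g')) := by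
    intro g hg g' hg' hne
    have h1 := hq g hg
    have h1' := hq g' hg'
    have h2 := hE g hg
    have h2' := hE g' hg'
    have h3 := hu g hg
    have h3' := hu g' hg'
    have hqq : q g ≠ q g' := fun h => hne (congrArg X h)
    have hEE : E g ≠ E g' := by
      intro h
      apply h2.2.2.1
      exact (line_unique hqq h2.2.1 h1.2.1 (h ▸ h2'.2.1) h1'.2.1).symm ▸ rfl
    have hx1 : incid (meet (E g) (E g') hEE) (E g) := meet_incid_left _ _ hEE
    have hx2 : incid (meet (E g) (E g') hEE) (E g') := meet_incid_right _ _ hEE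
    have hxp : meet (E g) (E g') hEE ≠ p := fun h => hEp g hg (h ▸ hx1)
    have hcr : crossing L (meet (E g) (E g') hEE) :=
      crossing_of_pair hfin h2.1 h2'.1 hEE hx1 hx2
    have hxa : (meet (E g) (E g') hEE).rep ⬝ᵥ π ≠ 0 := hπq _ hcr hxp
    obtain ⟨gg, hggL, hpgg, hxgg⟩ := hp.2 _ hcr hxp
    have hggS : gg ∈ S := ⟨hggL, hpgg⟩
    have hqgg := hq gg hggS
    have hXx : X (meet (E g) (E g') hEE) = a gg :=
      hvert gg hpgg _ (q gg) hxa hqgg.2.2.1 hxgg hqgg.1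
    have hY1 : Y (meet (E g) (E g') hEE) =
        u g * (X (meet (E g) (E g') hEE) - a g) := h3.2 _ hxa hx1
    have hY2 : Y (meet (E g) (E g') hEE) =
        u g' * (X (meet (E g) (E g') hEE) - a g') := h3'.2 _ hxa hx2
    refine ⟨gg, hggS, ?_⟩
    rw [← hXx]
    have hYne : Y (meet (E g) (E g') hEE) ≠ 0 := by
      intro h0
      have e1 : u g * (X (meet (E g) (E g') hEE) - a g) = 0 := by rw [← hY1]; exact h0
      have e2 : u g' * (X (meet (E g) (E g') hEE) - a g') = 0 := by rw [← hY2]; exact h0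
      have hXg : X (meet (E g) (E g') hEE) = a g := by
        rcases mul_eq_zero.mp e1 with h | h
        · exact absurd h h3.1
        · linarith [sub_eq_zero.mp h]
      have hXg' : X (meet (E g) (E g') hEE) = a g' := by
        rcases mul_eq_zero.mp e2 with h | h
        · exact absurd h h3'.1
        · linarith [sub_eq_zero.mp h]
      exact hne (hXg ▸ hXg')
    have hkey : u g * u g' * ((X (meet (E g) (E g') hEE) - a g) *
        (X (meet (E g) (E g') hEE) - a g')) =
        (u g * (X (meet (E g) (E g') hEE) - a g)) *
        (u g' * (X (meet (E g) (E g') hEE) - a g')) := by ring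
    rw [hkey, ← hY1, ← hY2]
    exact mul_self_pos.mpr hYne
  -- apply the sign lemma
  have hpos := key_sign S hSfin a u hrel
  obtain ⟨g1, g2, hg1, hg2, hne12⟩ := (Set.one_lt_ncard_iff hSfin).1 hS2
  have ha12 : a g1 ≠ a g2 := fun h => hne12 (hainj g1 hg1 g2 hg2 h)
  have hSne : S.Nonempty := ⟨g1, hg1⟩
  obtain ⟨gM, hgM, hmax⟩ := Set.exists_max_image S a hSfin hSne
  obtain ⟨gm, hgm, hmin⟩ := Set.exists_min_image S a hSfin hSne
  have ham : a gm ≠ a gM := by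
    intro h
    apply ha12
    have e1 : a g1 ≤ a gM := hmax g1 hg1
    have e2 : a g2 ≤ a gM := hmax g2 hg2
    have e3 : a gm ≤ a g1 := hmin g1 hg1
    have e4 : a gm ≤ a g2 := hmin g2 hg2
    linarith
  obtain ⟨tt, htt, hpos2⟩ := hrel gm hgm gM hgM ham
  have hb1 : a gm ≤ a tt := hmin tt htt
  have hb2 : a tt ≤ a gM := hmax tt htt
  have h3 : 0 < u gm * u gM := hpos gm hgm gM hgM ham
  nlinarith [hpos2, h3, mul_nonneg (sub_nonneg.2 hb1) (sub_nonneg.2 hb2)]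
end

section
/- Let L be a real non-pencil supersolvable line arrangement with s lines and a modular point p of multiplicity m. Then t_2 ≥ max{s − m, m} ≥ s/2, where t_2 is the number of crossing points of multiplicity 2. -/
open Projectivization

open Matrix

noncomputable def det3 (a b c : Fin 3 → ℝ) : ℝ := a ⬝ᵥ (b ⨯₃ c)

lemma triple_exp (u v w : Fin 3 → ℝ) :
    u ⨯₃ (v ⨯₃ w) = (u ⬝ᵥ w) • v - (u ⬝ᵥ v) • w := by
  ext i
  fin_cases i <;>
    simp [cross_apply, dotProduct, Fin.sum_univ_three] <;> ring

lemma cross_eq_zero_imp {u v : Fin 3 → ℝ} (h : u ⨯₃ v = 0) (hu : u ≠ 0) :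
    ∃ t : ℝ, v = t • u := by
  have h0 := congrFun h 0
  have h1 := congrFun h 1
  have h2 := congrFun h 2
  simp [cross_apply] at h0 h1 h2
  rw [Function.ne_iff] at hu
  obtain ⟨i, hi⟩ := hu
  fin_cases i <;> simp at hi
  · exact ⟨v 0 / u 0, by
      ext j; fin_cases j <;> simp <;> field_simp <;> linarith⟩
  · exact ⟨v 1 / u 1, by
      ext j; fin_cases j <;> simp <;> field_simp <;> linarith⟩
  · exact ⟨v 2 / u 2, by
      ext j; fin_cases j <;> simp <;> field_simp <;> linarith⟩

lemma perp_perp {v a b : Fin 3 → ℝ} (hx : a ⨯₃ b ≠ 0)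
    (ha : v ⬝ᵥ a = 0) (hb : v ⬝ᵥ b = 0) : ∃ t : ℝ, v = t • (a ⨯₃ b) := by
  have h1 : v ⨯₃ (a ⨯₃ b) = 0 := by
    rw [triple_exp, ha, hb]; simp
  have h2 : (a ⨯₃ b) ⨯₃ v = 0 := by
    rw [← cross_anticomm, h1, neg_zero]
  exact cross_eq_zero_imp h2 hx

lemma span2 {a b u : Fin 3 → ℝ} (hx : a ⨯₃ b ≠ 0) (hu : u ⬝ᵥ (a ⨯₃ b) = 0) :
    ∃ α β : ℝ, u = α • a + β • b := by
  have hs : (a ⨯₃ b) ⬝ᵥ (a ⨯₃ b) ≠ 0 := by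
    intro hc
    exact hx (dotProduct_self_eq_zero.mp hc)
  set s : ℝ := (a ⨯₃ b) ⬝ᵥ (a ⨯₃ b) with hsdef
  have key : s • u = ((u ⬝ᵥ a)*(b ⬝ᵥ b) - (u ⬝ᵥ b)*(a ⬝ᵥ b)) • a
      + ((u ⬝ᵥ b)*(a ⬝ᵥ a) - (u ⬝ᵥ a)*(a ⬝ᵥ b)) • b + (u ⬝ᵥ (a ⨯₃ b)) • (a ⨯₃ b) := by
    ext i
    fin_cases i <;>
      simp [hsdef, dotProduct, cross_apply, Fin.sum_univ_three] <;> ring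
  rw [hu, zero_smul, add_zero] at key
  refine ⟨((u ⬝ᵥ a)*(b ⬝ᵥ b) - (u ⬝ᵥ b)*(a ⬝ᵥ b))/s,
          ((u ⬝ᵥ b)*(a ⬝ᵥ a) - (u ⬝ᵥ a)*(a ⬝ᵥ b))/s, ?_⟩
  have := congrArg (fun z => s⁻¹ • z) key
  simp only [smul_smul, inv_mul_cancel₀ hs, one_smul, smul_add] at this
  rw [div_eq_inv_mul, div_eq_inv_mul]
  exact this

lemma det3_expand (a b c : Fin 3 → ℝ) : det3 a b c =
    a 0 * (b 1 * c 2 - b 2 * c 1) + a 1 * (b 2 * c 0 - b 0 * c 2)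
      + a 2 * (b 0 * c 1 - b 1 * c 0) := by
  simp [det3, dotProduct, cross_apply, Fin.sum_univ_three]
  try ring

lemma pluecker (a b A B g : Fin 3 → ℝ) :
    det3 a A g * det3 b B g - det3 a B g * det3 b A g = det3 A B g * det3 a b g := by
  simp only [det3_expand]; ring

lemma det3_dot_cross (a b c : Fin 3 → ℝ) : det3 a b c = (b ⨯₃ c) ⬝ᵥ a := by
  simp [det3, dotProduct, cross_apply, Fin.sum_univ_three]; ring


section Det3More

lemma det3_smul1 (t : ℝ) (a b c : Fin 3 → ℝ) : det3 (t • a) b c = t * det3 a b c := by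
  simp only [det3_expand, Pi.smul_apply, smul_eq_mul]; ring

lemma det3_sub1 (a a' b c : Fin 3 → ℝ) :
    det3 (a - a') b c = det3 a b c - det3 a' b c := by
  simp only [det3_expand, Pi.sub_apply]; ring

lemma det3_cyclic (a b c : Fin 3 → ℝ) : det3 a b c = det3 c a b := by
  simp only [det3_expand]; ring

lemma det3_swap12 (a b c : Fin 3 → ℝ) : det3 a b c = - det3 b a c := by
  simp only [det3_expand]; ring

lemma det3_decomp (α1 β1 α2 β2 : ℝ) (g x y z : Fin 3 → ℝ) :
    det3 (α1 • g + β1 • x) (α2 • g + β2 • y) z =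
      α1 * β2 * det3 g y z + β1 * α2 * det3 x g z + β1 * β2 * det3 x y z := by
  simp only [det3_expand, Pi.add_apply, Pi.smul_apply, smul_eq_mul]; ring

lemma exists_basis_det3 {g : Fin 3 → ℝ} (hg : g ≠ 0) :
    ∃ A B : Fin 3 → ℝ, det3 A B g ≠ 0 := by
  rw [Function.ne_iff] at hg
  obtain ⟨i, hi⟩ := hg
  simp only [Pi.zero_apply] at hi
  fin_cases i
  · exact ⟨![0,1,0], ![0,0,1], by rw [det3_expand]; norm_num [Matrix.cons_val_two, Matrix.tail_cons, Matrix.head_cons]; exact hi⟩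
  · exact ⟨![0,0,1], ![1,0,0], by rw [det3_expand]; norm_num [Matrix.cons_val_two, Matrix.tail_cons, Matrix.head_cons]; exact hi⟩
  · exact ⟨![1,0,0], ![0,1,0], by rw [det3_expand]; norm_num [Matrix.cons_val_two, Matrix.tail_cons, Matrix.head_cons]; exact hi⟩

/-- if `a, b` are both orthogonal to a nonzero `P` and `a ⨯₃ b ≠ 0` then
`det3 a b c` is a nonzero multiple of `P ⬝ᵥ c`. -/
lemma det3_perp_perp {P a b : Fin 3 → ℝ} (hP : P ≠ 0) (hab : a ⨯₃ b ≠ 0)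
    (ha : P ⬝ᵥ a = 0) (hb : P ⬝ᵥ b = 0) :
    ∃ t : ℝ, t ≠ 0 ∧ ∀ c, det3 a b c = t * (P ⬝ᵥ c) := by
  obtain ⟨t, ht⟩ := perp_perp hab ha hb
  have htne : t ≠ 0 := fun h0 => hP (by rw [ht, h0, zero_smul])
  refine ⟨t⁻¹, inv_ne_zero htne, fun c => ?_⟩
  have h1 : det3 a b c = (a ⨯₃ b) ⬝ᵥ c := by
    simp [det3_expand, dotProduct, cross_apply, Fin.sum_univ_three]
    try ring
  rw [h1]
  have h2 : (a ⨯₃ b) = t⁻¹ • P := by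
    rw [ht, smul_smul, inv_mul_cancel₀ htne, one_smul]
  rw [h2, smul_dotProduct, smul_eq_mul]
end Det3More

section Proj

open Projectivization

lemma incid_mk_mk {x y : Fin 3 → ℝ} (hx : x ≠ 0) (hy : y ≠ 0) :
    incid (mk ℝ x hx) (mk ℝ y hy) ↔ x ⬝ᵥ y = 0 := by
  obtain ⟨a, ha⟩ := exists_smul_eq_mk_rep ℝ x hx
  obtain ⟨b, hb⟩ := exists_smul_eq_mk_rep ℝ y hy
  unfold incid
  rw [← ha, ← hb, smul_dotProduct, dotProduct_smul]
  rw [Units.smul_def, Units.smul_def, smul_eq_mul, smul_eq_mul, ← mul_assoc, mul_eq_zero]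
  simp [Units.ne_zero, mul_eq_zero]
end Proj

section Proj2
open Projectivization

lemma mk_eq_mk_smul {x y : Fin 3 → ℝ} (hx : x ≠ 0) (hy : y ≠ 0) :
    mk ℝ x hx = mk ℝ y hy ↔ ∃ t : ℝ, t ≠ 0 ∧ x = t • y := by
  rw [mk_eq_mk_iff']
  constructor
  · rintro ⟨a, ha⟩
    refine ⟨a, fun h0 => hx ?_, ha.symm⟩
    rw [← ha, h0, zero_smul]
  · rintro ⟨t, _, ht⟩; exact ⟨t, ht.symm⟩

lemma cross_rep_ne_zero_s12 {P Q : PP ℝ} (h : P ≠ Q) : P.rep ⨯₃ Q.rep ≠ 0 := by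
  intro hc
  obtain ⟨t, ht⟩ := cross_eq_zero_imp hc P.rep_nonzero
  have htne : t ≠ 0 := by
    intro h0; exact Q.rep_nonzero (by rw [ht, h0, zero_smul])
  apply h
  rw [← mk_rep P, ← mk_rep Q]
  rw [mk_eq_mk_smul]
  exact ⟨t⁻¹, inv_ne_zero htne, by rw [ht, smul_smul, inv_mul_cancel₀ htne, one_smul]⟩

lemma eq_of_both_perp {x y : PP ℝ} {a b : Fin 3 → ℝ} (hab : a ⨯₃ b ≠ 0)
    (h1 : x.rep ⬝ᵥ a = 0) (h2 : x.rep ⬝ᵥ b = 0)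
    (h3 : y.rep ⬝ᵥ a = 0) (h4 : y.rep ⬝ᵥ b = 0) : x = y := by
  obtain ⟨t, ht⟩ := perp_perp hab h1 h2
  obtain ⟨u, hu⟩ := perp_perp hab h3 h4
  have htne : t ≠ 0 := fun h0 => x.rep_nonzero (by rw [ht, h0, zero_smul])
  have hune : u ≠ 0 := fun h0 => y.rep_nonzero (by rw [hu, h0, zero_smul])
  rw [← mk_rep x, ← mk_rep y, mk_eq_mk_smul]
  exact ⟨t * u⁻¹, mul_ne_zero htne (inv_ne_zero hune), by
    rw [ht, hu, smul_smul, mul_assoc, inv_mul_cancel₀ hune, mul_one]⟩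
end Proj2

section ProjGeom
open Projectivization

lemma incid_def {x l : PP ℝ} : incid x l ↔ x.rep ⬝ᵥ l.rep = 0 := Iff.rfl

lemma incid_mk_left_s12 {x : Fin 3 → ℝ} (hx : x ≠ 0) (l : PP ℝ) :
    incid (mk ℝ x hx) l ↔ x ⬝ᵥ l.rep = 0 := by
  conv_lhs => rw [← mk_rep l]
  exact incid_mk_mk hx l.rep_nonzero

lemma incid_comm' {x l : PP ℝ} (h : incid x l) : l.rep ⬝ᵥ x.rep = 0 := by
  rw [dotProduct_comm]; exact h

/-- two distinct lines pass through at most one common point -/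
lemma eq_of_two_lines {x y a b : PP ℝ} (hab : a ≠ b)
    (hxa : incid x a) (hxb : incid x b) (hya : incid y a) (hyb : incid y b) : x = y :=
  eq_of_both_perp (cross_rep_ne_zero_s12 hab) (incid_def.mp hxa) (incid_def.mp hxb)
    (incid_def.mp hya) (incid_def.mp hyb)

/-- two distinct points lie on at most one common line -/
lemma eq_of_two_points {x y a b : PP ℝ} (hxy : x ≠ y)
    (hxa : incid x a) (hya : incid y a) (hxb : incid x b) (hyb : incid y b) : a = b :=
  eq_of_both_perp (cross_rep_ne_zero_s12 hxy) (incid_comm' hxa) (incid_comm' hya)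
    (incid_comm' hxb) (incid_comm' hyb)

/-- the crossing point of two (distinct) lines -/
noncomputable def xpt (g l : PP ℝ) (h : g ≠ l) : PP ℝ :=
  mk ℝ (g.rep ⨯₃ l.rep) (cross_rep_ne_zero_s12 h)

lemma xpt_incid_left (g l : PP ℝ) (h : g ≠ l) : incid (xpt g l h) g := by
  rw [xpt, incid_mk_left_s12, dotProduct_comm]
  exact dot_self_cross _ _

lemma xpt_incid_right (g l : PP ℝ) (h : g ≠ l) : incid (xpt g l h) l := by
  rw [xpt, incid_mk_left_s12, dotProduct_comm]
  exact dot_cross_self _ _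
end ProjGeom

section Core2D

def det2 (x y : ℝ × ℝ) : ℝ := x.1 * y.2 - x.2 * y.1

def pos2 (x : ℝ × ℝ) : Prop := 0 < x.2 ∨ (x.2 = 0 ∧ 0 < x.1)

lemma det2_antisymm (x y : ℝ × ℝ) : det2 x y = - det2 y x := by unfold det2; ring

lemma det2_self (x : ℝ × ℝ) : det2 x x = 0 := by unfold det2; ring

lemma pos2_neg_of {x : ℝ × ℝ} (hx : x ≠ 0) (h : ¬ pos2 x) : pos2 (-x) := by
  unfold pos2 at h ⊢
  push_neg at h
  obtain ⟨h2, h1⟩ := h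
  rcases lt_or_eq_of_le h2 with h2' | h2'
  · left
    simp only [Prod.snd_neg]
    linarith
  · right
    have hx2 : x.2 = 0 := h2'
    have hx1 : x.1 ≤ 0 := h1 hx2
    have hx1' : x.1 ≠ 0 := fun hc => hx (Prod.ext hc hx2)
    constructor
    · simp [hx2]
    · simp only [Prod.fst_neg]
      rcases lt_or_eq_of_le hx1 with h | h
      · linarith
      · exact absurd h hx1'

lemma pos2_nonneg {x : ℝ × ℝ} (h : pos2 x) : 0 ≤ x.2 := by
  rcases h with h | ⟨h, _⟩
  · exact le_of_lt h
  · exact le_of_eq h.symm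

lemma trans2D {a b c : ℝ × ℝ} (ha : pos2 a) (hb : pos2 b) (hc : pos2 c)
    (hab : 0 < det2 a b) (hbc : 0 < det2 b c) : 0 < det2 a c := by
  have h1 : det2 a c * b.1 = det2 b c * a.1 + det2 a b * c.1 := by unfold det2; ring
  have h2 : det2 a c * b.2 = det2 b c * a.2 + det2 a b * c.2 := by unfold det2; ring
  have ha2 := pos2_nonneg ha
  have hb2 := pos2_nonneg hb
  have hc2 := pos2_nonneg hc
  rcases lt_trichotomy (det2 a c) 0 with hac | hac | hac
  · exfalso
    have hS : 0 ≤ det2 b c * a.2 + det2 a b * c.2 := by positivity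
    have hL : det2 a c * b.2 ≤ 0 := mul_nonpos_of_nonpos_of_nonneg (le_of_lt hac) hb2
    have hz : det2 b c * a.2 + det2 a b * c.2 = 0 := le_antisymm (by linarith) hS
    have haz : a.2 = 0 := by nlinarith
    have hcz : c.2 = 0 := by nlinarith
    have ha1 : 0 < a.1 := by
      rcases ha with h | ⟨_, h⟩
      · linarith
      · exact h
    have hc1 : 0 < c.1 := by
      rcases hc with h | ⟨_, h⟩
      · linarith
      · exact h
    have : det2 a c = a.1 * c.2 - a.2 * c.1 := rfl
    rw [haz, hcz] at this
    simp at this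
    linarith
  · exfalso
    rw [hac, zero_mul] at h1 h2
    rcases ha with h | ⟨haz, ha1⟩
    · -- a.2 > 0 : det bc * a.2 > 0, so det ab * c.2 < 0 so c.2 < 0 contra
      nlinarith
    · rw [haz, mul_zero, zero_add] at h2
      have hcz : c.2 = 0 := by
        rcases mul_eq_zero.mp h2.symm with h' | h'
        · exact absurd h' (ne_of_gt hab)
        · exact h'
      have hc1 : 0 < c.1 := by
        rcases hc with h | ⟨_, h⟩
        · linarith
        · exact h
      nlinarith
  · exact hac
end Core2D

section CoreMain

lemma det2_smul_left (r : ℝ) (x y : ℝ × ℝ) : det2 (r • x) y = r * det2 x y := by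
  unfold det2; simp; ring

lemma det2_smul_right (r : ℝ) (x y : ℝ × ℝ) : det2 x (r • y) = r * det2 x y := by
  unfold det2; simp; ring

lemma det2_sub_right (x y z : ℝ × ℝ) : det2 x (y - z) = det2 x y - det2 x z := by
  unfold det2; simp; ring

lemma rsign_eq {ri rj X Y : ℝ} (hri : ri = 1 ∨ ri = -1) (hrj : rj = 1 ∨ rj = -1)
    (h : ri * X = rj * Y) (hXY : 0 < X * Y) : ri = rj := by
  rcases hri with h1 | h1 <;> rcases hrj with h2 | h2 <;> subst h1 <;> subst h2 <;>
    first | rfl | (exfalso; nlinarith [sq_nonneg (X + Y), sq_nonneg (X - Y)])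

lemma rsign_ne {ri rj X Y : ℝ} (hri : ri = 1 ∨ ri = -1) (hrj : rj = 1 ∨ rj = -1)
    (h : ri * X = rj * Y) (hXY : X * Y < 0) : ri ≠ rj := by
  rcases hri with h1 | h1 <;> rcases hrj with h2 | h2 <;> subst h1 <;> subst h2 <;>
    simp <;> nlinarith [sq_nonneg (X + Y), sq_nonneg (X - Y)]

lemma core2D {ι : Type*} [Fintype ι] (v : ι → ℝ × ℝ)
    (hcard : 2 ≤ Fintype.card ι)
    (hnd : ∀ i j, i ≠ j → det2 (v i) (v j) ≠ 0)
    (hyp : ∀ i j, i ≠ j → ∃ k, k ≠ i ∧ k ≠ j ∧ det2 (v k) (v i - v j) = 0) :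
    False := by
  classical
  set a : ι → ℝ × ℝ := fun i => if pos2 (v i) then v i else -(v i) with ha_def
  set r : ι → ℝ := fun i => if pos2 (v i) then 1 else -1 with hr_def
  have hvne : ∀ i, v i ≠ 0 := by
    intro i hvi
    obtain ⟨j, k, hjk⟩ := Fintype.exists_pair_of_one_lt_card hcard
    by_cases hij : i = j
    · subst hij; exact hnd i k hjk (by rw [hvi]; unfold det2; simp)
    · exact hnd j i (fun h => hij h.symm) (by rw [hvi]; unfold det2; simp)
  have hva : ∀ i, v i = r i • a i := by
    intro i
    by_cases h : pos2 (v i) <;> simp [ha_def, hr_def, h]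
  have hapos : ∀ i, pos2 (a i) := by
    intro i
    by_cases h : pos2 (v i)
    · have he : a i = v i := by simp [ha_def, h]
      rw [he]; exact h
    · have he : a i = -(v i) := by simp [ha_def, h]
      rw [he]; exact pos2_neg_of (hvne i) h
  have hr1 : ∀ i, r i = 1 ∨ r i = -1 := by
    intro i; by_cases h : pos2 (v i) <;> simp [hr_def, h]
  have hrr : ∀ i, r i * r i = 1 := by
    intro i; rcases hr1 i with h | h <;> rw [h] <;> norm_num
  have hdeta : ∀ i j, i ≠ j → det2 (a i) (a j) ≠ 0 := by
    intro i j hij hc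
    apply hnd i j hij
    rw [hva i, hva j, det2_smul_left, det2_smul_right, hc]
    ring
  have star : ∀ i j k, k ≠ i → k ≠ j → det2 (v k) (v i - v j) = 0 →
      r i * det2 (a k) (a i) = r j * det2 (a k) (a j) := by
    intro i j k _ _ heq
    rw [det2_sub_right, hva i, hva j, hva k, det2_smul_left, det2_smul_left,
      det2_smul_right, det2_smul_right] at heq
    rcases hr1 k with hk | hk <;> rw [hk] at heq <;> linarith
  -- order
  set lt : ι → ι → Prop := fun i j => 0 < det2 (a i) (a j) with hlt_def
  have ltasymm : ∀ {i j}, lt i j → ¬ lt j i := by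
    intro i j h1 h2
    rw [hlt_def] at h1 h2
    rw [det2_antisymm] at h1
    linarith
  have lttrans : ∀ {i j k}, lt i j → lt j k → lt i k := by
    intro i j k h1 h2
    exact trans2D (hapos i) (hapos j) (hapos k) h1 h2
  have ltirr : ∀ i, ¬ lt i i := by
    intro i h
    rw [hlt_def] at h
    rw [det2_self] at h
    exact lt_irrefl 0 h
  have lttotal : ∀ {i j}, i ≠ j → lt i j ∨ lt j i := by
    intro i j hij
    rcases lt_trichotomy (det2 (a i) (a j)) 0 with h | h | h
    · right; rw [hlt_def]; rw [det2_antisymm] at h; linarith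
    · exact absurd h (hdeta i j hij)
    · left; exact h
  have ltne : ∀ {i j}, lt i j → i ≠ j := by
    rintro i j h rfl; exact ltirr i h
  set gap : ι → ι → Finset ι := fun i j => Finset.univ.filter (fun k => lt i k ∧ lt k j)
    with hgap_def
  -- step 1 : there is a pair with lt i j and r i ≠ r j
  have step1 : ∃ i j, lt i j ∧ r i ≠ r j := by
    obtain ⟨i0, j0, hij0⟩ := Fintype.exists_pair_of_one_lt_card hcard
    have hP : (Finset.univ.filter (fun p : ι × ι => lt p.1 p.2)).Nonempty := by
      rcases lttotal hij0 with h | h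
      · exact ⟨(i0, j0), by simp [h]⟩
      · exact ⟨(j0, i0), by simp [h]⟩
    obtain ⟨⟨i, j⟩, hmem, hmax⟩ :=
      Finset.exists_max_image _ (fun p : ι × ι => (gap p.1 p.2).card) hP
    simp only [Finset.mem_filter, Finset.mem_univ, true_and] at hmem
    obtain ⟨k, hki, hkj, heq⟩ := hyp i j (ltne hmem)
    have req := star i j k hki hkj heq
    rcases lt_trichotomy (det2 (a k) (a i)) 0 with hkiv | hkiv | hkiv
    · -- lt i k
      have hik : lt i k := by
        rw [hlt_def]; rw [det2_antisymm] at hkiv; linarith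
      rcases lt_trichotomy (det2 (a k) (a j)) 0 with hkjv | hkjv | hkjv
      · -- lt j k : maximality contradiction with pair (i,k)
        exfalso
        have hjk : lt j k := by
          rw [hlt_def]; rw [det2_antisymm] at hkjv; linarith
        have hsub : gap i j ⊂ gap i k := by
          constructor
          · intro x hx
            simp only [hgap_def, Finset.mem_filter, Finset.mem_univ, true_and] at hx ⊢
            exact ⟨hx.1, lttrans hx.2 hjk⟩
          · intro hcon
            have hjmem : j ∈ gap i k := by
              simp only [hgap_def, Finset.mem_filter, Finset.mem_univ, true_and]
              exact ⟨hmem, hjk⟩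
            have := hcon hjmem
            simp only [hgap_def, Finset.mem_filter, Finset.mem_univ, true_and] at this
            exact ltirr j this.2
        have hcard := Finset.card_lt_card hsub
        have := hmax (i, k) (by simp [hik])
        simp only at this
        omega
      · exact absurd hkjv (hdeta k j hkj)
      · -- between : sign difference
        exact ⟨i, j, hmem, rsign_ne (hr1 i) (hr1 j) req (by nlinarith)⟩
    · exact absurd hkiv (hdeta k i hki)
    · -- lt k i : maximality contradiction with pair (k,j)
      exfalso
      have hki' : lt k i := hkiv
      have hkj' : lt k j := lttrans hki' hmem
      have hsub : gap i j ⊂ gap k j := by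
        constructor
        · intro x hx
          simp only [hgap_def, Finset.mem_filter, Finset.mem_univ, true_and] at hx ⊢
          exact ⟨lttrans hki' hx.1, hx.2⟩
        · intro hcon
          have himem : i ∈ gap k j := by
            simp only [hgap_def, Finset.mem_filter, Finset.mem_univ, true_and]
            exact ⟨hki', hmem⟩
          have := hcon himem
          simp only [hgap_def, Finset.mem_filter, Finset.mem_univ, true_and] at this
          exact ltirr i this.1
      have hcard := Finset.card_lt_card hsub
      have := hmax (k, j) (by simp [hkj'])
      simp only at this
      omega
  -- step 2 : minimal mixed pair
  obtain ⟨i1, j1, hlt1, hne1⟩ := step1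
  have hP2 : (Finset.univ.filter (fun p : ι × ι => lt p.1 p.2 ∧ r p.1 ≠ r p.2)).Nonempty :=
    ⟨(i1, j1), by simp [hlt1, hne1]⟩
  obtain ⟨⟨i, j⟩, hmem, hmin⟩ :=
    Finset.exists_min_image _ (fun p : ι × ι => (gap p.1 p.2).card) hP2
  simp only [Finset.mem_filter, Finset.mem_univ, true_and] at hmem
  obtain ⟨hltij, hrij⟩ := hmem
  obtain ⟨k, hki, hkj, heq⟩ := hyp i j (ltne hltij)
  have req := star i j k hki hkj heq
  rcases lt_trichotomy (det2 (a k) (a i)) 0 with hkiv | hkiv | hkiv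
  · -- lt i k
    have hik : lt i k := by
      rw [hlt_def]; rw [det2_antisymm] at hkiv; linarith
    rcases lt_trichotomy (det2 (a k) (a j)) 0 with hkjv | hkjv | hkjv
    · -- lt j k : both dets negative : r i = r j contradiction
      exact hrij (rsign_eq (hr1 i) (hr1 j) req (by nlinarith))
    · exact absurd hkjv (hdeta k j hkj)
    · -- between
      have hkj' : lt k j := hkjv
      rcases eq_or_ne (r k) (r i) with hrk | hrk
      · -- use pair (k, j)
        have hsub : gap k j ⊂ gap i j := by
          constructor
          · intro x hx
            simp only [hgap_def, Finset.mem_filter, Finset.mem_univ, true_and] at hx ⊢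
            exact ⟨lttrans hik hx.1, hx.2⟩
          · intro hcon
            have hkmem : k ∈ gap i j := by
              simp only [hgap_def, Finset.mem_filter, Finset.mem_univ, true_and]
              exact ⟨hik, hkj'⟩
            have := hcon hkmem
            simp only [hgap_def, Finset.mem_filter, Finset.mem_univ, true_and] at this
            exact ltirr k this.1
        have hcard := Finset.card_lt_card hsub
        have := hmin (k, j) (by simp [hkj', hrk ▸ hrij])
        simp only at this
        omega
      · -- use pair (i, k)
        have hsub : gap i k ⊂ gap i j := by
          constructor
          · intro x hx
            simp only [hgap_def, Finset.mem_filter, Finset.mem_univ, true_and] at hx ⊢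
            exact ⟨hx.1, lttrans hx.2 hkj'⟩
          · intro hcon
            have hkmem : k ∈ gap i j := by
              simp only [hgap_def, Finset.mem_filter, Finset.mem_univ, true_and]
              exact ⟨hik, hkj'⟩
            have := hcon hkmem
            simp only [hgap_def, Finset.mem_filter, Finset.mem_univ, true_and] at this
            exact ltirr k this.2
        have hcard := Finset.card_lt_card hsub
        have := hmin (i, k) (by simp [hik, Ne.symm hrk])
        simp only at this
        omega
  · exact absurd hkiv (hdeta k i hki)
  · -- lt k i : both dets positive
    have hkj' : lt k j := lttrans hkiv hltij
    exact hrij (rsign_eq (hr1 i) (hr1 j) req (by nlinarith))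
end CoreMain


section Arrangement
open Projectivization

lemma mult_def (L : Set (PP ℝ)) (x : PP ℝ) : mult L x = {l ∈ L | incid x l}.ncard := rfl

lemma mult_ge_two {L : Set (PP ℝ)} (hfin : L.Finite) {x l1 l2 : PP ℝ} (h1 : l1 ∈ L)
    (h2 : l2 ∈ L) (h12 : l1 ≠ l2) (hx1 : incid x l1) (hx2 : incid x l2) : 2 ≤ mult L x := by
  have hsub : ({l1, l2} : Set (PP ℝ)) ⊆ {l ∈ L | incid x l} := by
    rintro l hl
    rcases hl with rfl | hl
    · exact ⟨h1, hx1⟩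
    · rw [Set.mem_singleton_iff] at hl
      subst hl
      exact ⟨h2, hx2⟩
  calc 2 = ({l1, l2} : Set (PP ℝ)).ncard := (Set.ncard_pair h12).symm
    _ ≤ {l ∈ L | incid x l}.ncard :=
        Set.ncard_le_ncard hsub (hfin.subset (Set.sep_subset _ _))

lemma mult_ge_three {L : Set (PP ℝ)} (hfin : L.Finite) {x l1 l2 l3 : PP ℝ} (h1 : l1 ∈ L)
    (h2 : l2 ∈ L) (h3 : l3 ∈ L) (h12 : l1 ≠ l2) (h13 : l1 ≠ l3) (h23 : l2 ≠ l3)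
    (hx1 : incid x l1) (hx2 : incid x l2) (hx3 : incid x l3) : 3 ≤ mult L x := by
  have hsub : ({l1, l2, l3} : Set (PP ℝ)) ⊆ {l ∈ L | incid x l} := by
    rintro l hl
    rcases hl with rfl | hl
    · exact ⟨h1, hx1⟩
    · rcases hl with rfl | hl
      · exact ⟨h2, hx2⟩
      · rw [Set.mem_singleton_iff] at hl
        subst hl
        exact ⟨h3, hx3⟩
  have hc : ({l1, l2, l3} : Set (PP ℝ)).ncard = 3 := by
    rw [Set.ncard_insert_of_notMem (by simp [h12, h13]) (Set.toFinite _),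
      Set.ncard_pair h23]
  calc 3 = ({l1, l2, l3} : Set (PP ℝ)).ncard := hc.symm
    _ ≤ {l ∈ L | incid x l}.ncard :=
        Set.ncard_le_ncard hsub (hfin.subset (Set.sep_subset _ _))

lemma third_line {L : Set (PP ℝ)} (hfin : L.Finite) {x l1 l2 : PP ℝ} (h1 : l1 ∈ L)
    (h2 : l2 ∈ L) (h12 : l1 ≠ l2) (hx1 : incid x l1) (hx2 : incid x l2)
    (hm : mult L x ≠ 2) : ∃ h ∈ L, incid x h ∧ h ≠ l1 ∧ h ≠ l2 := by
  by_contra hc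
  push_neg at hc
  apply hm
  have hset : {l ∈ L | incid x l} = {l1, l2} := by
    apply Set.Subset.antisymm
    · rintro l ⟨hl, hxl⟩
      by_cases e1 : l = l1
      · exact Or.inl e1
      · exact Or.inr (hc l hl hxl e1)
    · rintro l hl
      rcases hl with rfl | hl
      · exact ⟨h1, hx1⟩
      · rw [Set.mem_singleton_iff] at hl
        subst hl
        exact ⟨h2, hx2⟩
  rw [mult_def, hset, Set.ncard_pair h12]

lemma eq_of_rep_smul {u w : PP ℝ} {t : ℝ} (h : u.rep = t • w.rep) : u = w := by
  have htne : t ≠ 0 := by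
    intro h0
    exact u.rep_nonzero (by rw [h, h0, zero_smul])
  rw [← mk_rep u, ← mk_rep w, mk_eq_mk_smul]
  exact ⟨t, htne, h⟩
end Arrangement

section PerG
open Projectivization

lemma det3_eq_cross_dot (a b c : Fin 3 → ℝ) : det3 a b c = (a ⨯₃ b) ⬝ᵥ c := by
  simp [det3_expand, dotProduct, cross_apply, Fin.sum_univ_three]
  try ring

lemma DP_finite {L : Set (PP ℝ)} (hfin : L.Finite) : {y : PP ℝ | mult L y = 2}.Finite := by
  have hin : ∀ l1 l2 : PP ℝ, {y : PP ℝ | l1 ≠ l2 ∧ incid y l1 ∧ incid y l2}.Finite := by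
    intro l1 l2
    by_cases h12 : l1 = l2
    · apply Set.Finite.subset Set.finite_empty
      intro y hy
      exact (hy.1 h12).elim
    · apply Set.Subsingleton.finite
      intro y hy z hz
      exact eq_of_two_lines h12 hy.2.1 hy.2.2 hz.2.1 hz.2.2
  apply Set.Finite.subset
    (Set.Finite.biUnion hfin (fun l1 _ => Set.Finite.biUnion hfin (fun l2 _ => hin l1 l2)))
  intro y hy
  simp only [Set.mem_setOf_eq] at hy
  have hfs : {l ∈ L | incid y l}.Finite := hfin.subset (Set.sep_subset _ _)
  have h2 : 1 < {l ∈ L | incid y l}.ncard := by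
    rw [← mult_def]; omega
  obtain ⟨l1, l2, hm1, hm2, hne⟩ := (Set.one_lt_ncard_iff hfs).mp h2
  exact Set.mem_biUnion hm1.1 (Set.mem_biUnion hm2.1 ⟨hne, hm1.2, hm2.2⟩)

lemma perG {L : Set (PP ℝ)} {p : PP ℝ} (hfin : L.Finite) (hp : modular L p)
    {g : PP ℝ} (hgL : g ∈ L) (hpg : ¬ incid p g) :
    1 ≤ {y | mult L y = 2 ∧ incid y g}.ncard ∧
      {l ∈ L | incid p l}.ncard + 1 ≤
        {y | mult L y = 2 ∧ incid y g}.ncard + (L \ {l ∈ L | incid p l}).ncard := by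
  classical
  set Lp := {l ∈ L | incid p l} with hLp_def
  set Dg := {y | mult L y = 2 ∧ incid y g} with hDg_def
  have hLpfin : Lp.Finite := hfin.subset (Set.sep_subset _ _)
  have hDgfin : Dg.Finite := (DP_finite hfin).subset (fun y hy => hy.1)
  have hm2 : 2 ≤ Lp.ncard := hp.1
  have hgl : ∀ l ∈ Lp, g ≠ l := by
    rintro l ⟨hlL, hpl⟩ rfl
    exact hpg hpl
  set x : PP ℝ → PP ℝ := fun l => if h : g ≠ l then xpt g l h else p with hx_def
  have hxeq : ∀ l ∈ Lp, ∀ (h : g ≠ l), x l = xpt g l h := by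
    intro l hl h
    simp only [hx_def, dif_pos h]
  have hxg : ∀ l ∈ Lp, incid (x l) g := by
    intro l hl
    rw [hxeq l hl (hgl l hl)]
    exact xpt_incid_left _ _ _
  have hxl : ∀ l ∈ Lp, incid (x l) l := by
    intro l hl
    rw [hxeq l hl (hgl l hl)]
    exact xpt_incid_right _ _ _
  have hxnp : ∀ l ∈ Lp, x l ≠ p := by
    intro l hl he
    exact hpg (he ▸ hxg l hl)
  have hxinj : ∀ l ∈ Lp, ∀ l' ∈ Lp, x l = x l' → l = l' := by
    intro l hl l' hl' he
    by_contra hne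
    apply hxnp l hl
    exact eq_of_two_lines hne (hxl l hl) (he ▸ hxl l' hl') hl.2 hl'.2
  have hbad : ∀ l ∈ Lp, mult L (x l) ≠ 2 →
      ∃ h, (h ∈ L ∧ h ∉ Lp ∧ h ≠ g) ∧ incid (x l) h := by
    intro l hl hm
    obtain ⟨h, hhL, hxh, hhg, hhl⟩ :=
      third_line hfin hgL hl.1 (hgl l hl) (hxg l hl) (hxl l hl) hm
    refine ⟨h, ⟨hhL, ?_, hhg⟩, hxh⟩
    intro hhLp
    exact hhl (eq_of_two_points (hxnp l hl) hxh hhLp.2 (hxl l hl) hl.2)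
  -- Part (a) : some line of the pencil gives a double point on g
  have parta : ∃ l ∈ Lp, mult L (x l) = 2 := by
    by_contra hnone
    push_neg at hnone
    letI : Fintype ↥Lp := hLpfin.fintype
    have hcard : 2 ≤ Fintype.card ↥Lp := by
      rw [← Nat.card_eq_fintype_card, Nat.card_coe_set_eq]
      exact hm2
    have hchoice : ∀ i : ↥Lp, ∃ (h : PP ℝ) (α β : ℝ), (h ∈ L ∧ h ∉ Lp ∧ h ≠ g) ∧ incid (x i) h ∧
        α ≠ 0 ∧ β ≠ 0 ∧ h.rep = α • g.rep + β • (i : PP ℝ).rep := by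
      rintro ⟨l, hl⟩
      obtain ⟨h, hprop, hinc⟩ := hbad l hl (hnone l hl)
      have hXne : g.rep ⨯₃ l.rep ≠ 0 := cross_rep_ne_zero_s12 (hgl l hl)
      have hperp : h.rep ⬝ᵥ (g.rep ⨯₃ l.rep) = 0 := by
        have hxi : incid (xpt g l (hgl l hl)) h := by
          rw [← hxeq l hl]
          exact hinc
        rw [xpt, incid_mk_left_s12] at hxi
        rw [dotProduct_comm]
        exact hxi
      obtain ⟨α, β, hab⟩ := span2 hXne hperp
      refine ⟨h, α, β, hprop, hinc, ?_, ?_, hab⟩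
      · intro h0
        rw [h0, zero_smul, zero_add] at hab
        exact hprop.2.1 (by rw [eq_of_rep_smul hab]; exact hl)
      · intro h0
        rw [h0, zero_smul, add_zero] at hab
        exact hprop.2.2 (eq_of_rep_smul hab)
    choose h α β hprop hinc hα hβ hrep using hchoice
    set Λ : ↥Lp → (Fin 3 → ℝ) := fun i => (i : PP ℝ).rep with hΛ_def
    obtain ⟨A, B, hAB⟩ := exists_basis_det3 g.rep_nonzero
    have hpl : ∀ i : ↥Lp, p.rep ⬝ᵥ Λ i = 0 := fun i => i.2.2
    have hsubne : ∀ i j : ↥Lp, i ≠ j → (i : PP ℝ) ≠ (j : PP ℝ) :=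
      fun i j hij he => hij (Subtype.ext he)
    have hDfact : ∀ i j : ↥Lp, i ≠ j →
        ∃ t, t ≠ 0 ∧ ∀ c, det3 (Λ i) (Λ j) c = t * (p.rep ⬝ᵥ c) := by
      intro i j hij
      exact det3_perp_perp p.rep_nonzero (cross_rep_ne_zero_s12 (hsubne i j hij))
        (hpl i) (hpl j)
    have hDg0 : ∀ i j : ↥Lp, i ≠ j → det3 (Λ i) (Λ j) g.rep ≠ 0 := by
      intro i j hij
      obtain ⟨t, ht, hform⟩ := hDfact i j hij
      rw [hform g.rep]
      exact mul_ne_zero ht hpg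
    have hDΛ : ∀ i j k : ↥Lp, i ≠ j → det3 (Λ i) (Λ j) (Λ k) = 0 := by
      intro i j k hij
      obtain ⟨t, _, hform⟩ := hDfact i j hij
      rw [hform (Λ k), hpl k, mul_zero]
    set v : ↥Lp → ℝ × ℝ := fun i =>
      ((β i / α i) * det3 (Λ i) A g.rep, (β i / α i) * det3 (Λ i) B g.rep) with hv_def
    apply core2D v hcard
    · intro i j hij
      have hpk := pluecker (Λ i) (Λ j) A B g.rep
      have he : det2 (v i) (v j) =
          (β i / α i) * (β j / α j) * (det3 A B g.rep * det3 (Λ i) (Λ j) g.rep) := by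
        simp only [hv_def, det2]
        linear_combination ((β i / α i) * (β j / α j)) * hpk
      rw [he]
      exact mul_ne_zero (mul_ne_zero (div_ne_zero (hβ _) (hα _))
        (div_ne_zero (hβ _) (hα _))) (mul_ne_zero hAB (hDg0 i j hij))
    · intro i j hij
      have hxne : x (i : PP ℝ) ≠ x (j : PP ℝ) := by
        intro he
        exact hij (Subtype.ext (hxinj _ i.2 _ j.2 he))
      have hhij : h i ≠ h j := by
        intro he
        apply (hprop i).2.2
        exact eq_of_two_points hxne (hinc i) (he ▸ hinc j) (hxg _ i.2) (hxg _ j.2)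
      have hqi : incid (xpt (h i) (h j) hhij) (h i) := xpt_incid_left _ _ _
      have hqj : incid (xpt (h i) (h j) hhij) (h j) := xpt_incid_right _ _ _
      have hqcross : crossing L (xpt (h i) (h j) hhij) :=
        mult_ge_two hfin (hprop i).1 (hprop j).1 hhij hqi hqj
      have hqp : xpt (h i) (h j) hhij ≠ p := by
        intro he
        exact (hprop i).2.1 ⟨(hprop i).1, he ▸ hqi⟩
      obtain ⟨l₀, hl₀L, hpl₀, hql₀⟩ := hp.2 _ hqcross hqp
      set k : ↥Lp := ⟨l₀, hl₀L, hpl₀⟩ with hk_def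
      have hki : k ≠ i := by
        intro he
        have hne1 : (i : PP ℝ) ≠ h i := by
          intro he2
          exact (hprop i).2.1 (he2 ▸ i.2)
        have hqxi : xpt (h i) (h j) hhij = x (i : PP ℝ) := by
          apply eq_of_two_lines hne1
          · have hco : l₀ = (i : PP ℝ) := congrArg Subtype.val he
            rw [← hco]
            exact hql₀
          · exact hqi
          · exact hxl _ i.2
          · exact hinc i
        apply (hprop j).2.2
        exact eq_of_two_points hxne (hqxi ▸ hqj) (hinc j) (hxg _ i.2) (hxg _ j.2)
      have hkj : k ≠ j := by
        intro he
        have hne1 : (j : PP ℝ) ≠ h j := by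
          intro he2
          exact (hprop j).2.1 (he2 ▸ j.2)
        have hqxj : xpt (h i) (h j) hhij = x (j : PP ℝ) := by
          apply eq_of_two_lines hne1
          · have hco : l₀ = (j : PP ℝ) := congrArg Subtype.val he
            rw [← hco]
            exact hql₀
          · exact hqj
          · exact hxl _ j.2
          · exact hinc j
        apply (hprop i).2.2
        exact eq_of_two_points hxne (hinc i) (hqxj ▸ hqi) (hxg _ i.2) (hxg _ j.2)
      refine ⟨k, hki, hkj, ?_⟩
      -- the incidence equation
      have E0 : det3 (h i).rep (h j).rep (Λ k) = 0 := by
        rw [det3_eq_cross_dot]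
        have := hql₀
        rw [xpt, incid_mk_left_s12] at this
        exact this
      rw [hrep i, hrep j, det3_decomp] at E0
      rw [hDΛ i j k hij] at E0
      have c1 : det3 g.rep (Λ j) (Λ k) = - det3 (Λ k) (Λ j) g.rep := by
        simp only [det3_expand]; ring
      have c2 : det3 (Λ i) g.rep (Λ k) = det3 (Λ k) (Λ i) g.rep := by
        simp only [det3_expand]; ring
      rw [c1, c2] at E0
      have key : α j * β i * det3 (Λ k) (Λ i) g.rep
          = α i * β j * det3 (Λ k) (Λ j) g.rep := by
        linear_combination E0
      have p1 := pluecker (Λ k) (Λ i) A B g.rep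
      have p2 := pluecker (Λ k) (Λ j) A B g.rep
      have e2 : (β i / α i) * det3 (Λ k) (Λ i) g.rep
          - (β j / α j) * det3 (Λ k) (Λ j) g.rep = 0 := by
        rw [div_mul_eq_mul_div, div_mul_eq_mul_div, div_sub_div _ _ (hα i) (hα j),
          div_eq_zero_iff]
        left
        linear_combination key
      have e1 : det2 (v k) (v i - v j) = (β k / α k) * det3 A B g.rep *
          ((β i / α i) * det3 (Λ k) (Λ i) g.rep
            - (β j / α j) * det3 (Λ k) (Λ j) g.rep) := by
        simp only [hv_def, det2, Prod.fst_sub, Prod.snd_sub]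
        linear_combination ((β k / α k) * (β i / α i)) * p1
          - ((β k / α k) * (β j / α j)) * p2
      rw [e1, e2, mul_zero]
  -- Part (b) : the counting estimate
  set Good := {l ∈ Lp | mult L (x l) = 2} with hGood_def
  have hGsub : Good ⊆ Lp := Set.sep_subset _ _
  have hGB : (Lp \ Good).ncard + Good.ncard = Lp.ncard :=
    Set.ncard_diff_add_ncard_of_subset hGsub hLpfin
  have himg : ∀ l ∈ Good, x l ∈ Dg := fun l hl => ⟨hl.2, hxg l hl.1⟩
  have hGle : Good.ncard ≤ Dg.ncard :=
    Set.ncard_le_ncard_of_injOn x himg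
      (fun l hl l' hl' he => hxinj l (hGsub hl) l' (hGsub hl') he) hDgfin
  have hBadw : ∀ l : PP ℝ, ∃ hb, l ∈ Lp \ Good →
      (hb ∈ L ∧ hb ∉ Lp ∧ hb ≠ g) ∧ incid (x l) hb := by
    intro l
    by_cases hl : l ∈ Lp \ Good
    · obtain ⟨hb, h1, h2⟩ := hbad l hl.1 (fun he => hl.2 ⟨hl.1, he⟩)
      exact ⟨hb, fun _ => ⟨h1, h2⟩⟩
    · exact ⟨g, fun hc => absurd hc hl⟩
  choose wit hwit using hBadw
  have hwmem : ∀ l ∈ Lp \ Good, wit l ∈ (L \ Lp) \ {g} := by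
    intro l hl
    obtain ⟨⟨h1, h2, h3⟩, _⟩ := hwit l hl
    exact ⟨⟨h1, h2⟩, h3⟩
  have hwinj : Set.InjOn wit (Lp \ Good) := by
    intro l hl l' hl' he
    by_contra hne
    have hxne : x l ≠ x l' := fun hx => hne (hxinj l hl.1 l' hl'.1 hx)
    apply ((hwit l hl).1).2.2
    exact eq_of_two_points hxne (hwit l hl).2 (he ▸ (hwit l' hl').2)
      (hxg l hl.1) (hxg l' hl'.1)
  have hBle : (Lp \ Good).ncard ≤ ((L \ Lp) \ {g}).ncard :=
    Set.ncard_le_ncard_of_injOn wit hwmem hwinj (hfin.diff.diff)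
  have hgmem : ({g} : Set (PP ℝ)) ⊆ L \ Lp := by
    rintro y rfl
    exact ⟨hgL, fun hc => hpg hc.2⟩
  have hsing : ((L \ Lp) \ {g}).ncard + 1 = (L \ Lp).ncard := by
    have := Set.ncard_diff_add_ncard_of_subset hgmem hfin.diff
    rwa [Set.ncard_singleton] at this
  have hDgpos : 1 ≤ Dg.ncard := by
    obtain ⟨l, hl, hml⟩ := parta
    rw [Nat.one_le_iff_ne_zero, ← Nat.pos_iff_ne_zero, Set.ncard_pos hDgfin]
    exact ⟨x l, ⟨hml, hxg l hl⟩⟩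
  exact ⟨hDgpos, by omega⟩
end PerG


/-- a real non-pencil supersolvable arrangement of s lines with a
modular point of multiplicity m satisfies t₂ ≥ max{s - m, m} ≥ s/2. -/
theorem real_supersolvable_t2_bound (L : Set (PP ℝ))
    (hfin : L.Finite) (hnp : ¬ isPencil L) (p : PP ℝ) (m : ℕ)
    (hp : modular L p) (hpm : mult L p = m) :
    max (L.ncard - m) m ≤ tk L 2 ∧ L.ncard ≤ 2 * tk L 2 := by
  classical
  set Lp := {l ∈ L | incid p l} with hLp_def
  have hm : Lp.ncard = m := hpm
  set G := L \ Lp with hG_def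
  have hLpfin : Lp.Finite := hfin.subset (Set.sep_subset _ _)
  have hGfin : G.Finite := hfin.diff
  have hm2 : 2 ≤ m := hm ▸ hp.1
  have hGL : ∀ g ∈ G, g ∈ L ∧ ¬ incid p g := by
    rintro g ⟨hgL, hgnotLp⟩
    exact ⟨hgL, fun hc => hgnotLp ⟨hgL, hc⟩⟩
  have hGne : G.Nonempty := by
    rw [Set.nonempty_iff_ne_empty]
    intro he
    apply hnp
    refine ⟨p, fun l hl => ?_⟩
    by_contra hc
    have hmem : l ∈ G := ⟨hl, fun h => hc h.2⟩
    rw [he] at hmem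
    exact hmem
  set n := G.ncard with hn_def
  have hn1 : 1 ≤ n := (Set.ncard_pos hGfin).mpr hGne
  have hsum : n + m = L.ncard := by
    rw [hn_def, ← hm, hG_def]
    exact Set.ncard_diff_add_ncard_of_subset (Set.sep_subset _ _) hfin
  set DP := {y : PP ℝ | mult L y = 2} with hDP_def
  have hDPfin := DP_finite hfin
  have ht2 : tk L 2 = DP.ncard := rfl
  set DPf := hDPfin.toFinset with hDPf_def
  set Gf := hGfin.toFinset with hGf_def
  set Dgf : PP ℝ → Finset (PP ℝ) := fun g => DPf.filter (fun y => incid y g) with hDgf_def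
  have hmemDgf : ∀ g y, y ∈ Dgf g ↔ (mult L y = 2 ∧ incid y g) := by
    intro g y
    rw [hDgf_def]
    simp only [Finset.mem_filter, hDPf_def, Set.Finite.mem_toFinset, hDP_def,
      Set.mem_setOf_eq]
  have hDgcard : ∀ g, (Dgf g).card = {y | mult L y = 2 ∧ incid y g}.ncard := by
    intro g
    have hset : ((Dgf g : Finset (PP ℝ)) : Set (PP ℝ)) = {y | mult L y = 2 ∧ incid y g} := by
      ext y
      rw [Finset.mem_coe, hmemDgf g y, Set.mem_setOf_eq]
    rw [← hset, Set.ncard_coe_finset]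
  have hper : ∀ g ∈ Gf, 1 ≤ (Dgf g).card ∧ m + 1 ≤ (Dgf g).card + n := by
    intro g hg
    rw [hGf_def, Set.Finite.mem_toFinset] at hg
    obtain ⟨h1, h2⟩ := perG hfin hp (hGL g hg).1 (hGL g hg).2
    rw [← hLp_def, hm, ← hG_def, ← hn_def] at h2
    rw [hDgcard g]
    exact ⟨h1, h2⟩
  have hdisj : ∀ g1 ∈ Gf, ∀ g2 ∈ Gf, g1 ≠ g2 → Disjoint (Dgf g1) (Dgf g2) := by
    intro g1 hg1 g2 hg2 hne
    rw [hGf_def, Set.Finite.mem_toFinset] at hg1 hg2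
    rw [Finset.disjoint_left]
    intro y hy1 hy2
    rw [hmemDgf] at hy1 hy2
    have hynp : y ≠ p := by
      intro he
      exact (hGL g1 hg1).2 (he ▸ hy1.2)
    have hycross : crossing L y := by
      show 2 ≤ mult L y
      omega
    obtain ⟨l, hlL, hpl, hyl⟩ := hp.2 y hycross hynp
    have hlg1 : l ≠ g1 := fun he => (hGL g1 hg1).2 (he ▸ hpl)
    have hlg2 : l ≠ g2 := fun he => (hGL g2 hg2).2 (he ▸ hpl)
    have := mult_ge_three hfin hlL (hGL g1 hg1).1 (hGL g2 hg2).1 hlg1 hlg2 hne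
      hyl hy1.2 hy2.2
    omega
  have hcardU : (Gf.biUnion Dgf).card = ∑ g ∈ Gf, (Dgf g).card :=
    Finset.card_biUnion hdisj
  have hsub : Gf.biUnion Dgf ⊆ DPf := by
    intro y hy
    rw [Finset.mem_biUnion] at hy
    obtain ⟨g, _, hyg⟩ := hy
    rw [hDgf_def] at hyg
    exact (Finset.mem_filter.mp hyg).1
  have hUle : ∑ g ∈ Gf, (Dgf g).card ≤ tk L 2 := by
    rw [← hcardU, ht2, Set.ncard_eq_toFinset_card DP hDPfin]
    exact Finset.card_le_card hsub
  have hGfcard : Gf.card = n := by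
    rw [hGf_def, hn_def, Set.ncard_eq_toFinset_card G hGfin]
  have hnle : n ≤ tk L 2 := by
    have h1 : ∑ g ∈ Gf, 1 ≤ ∑ g ∈ Gf, (Dgf g).card :=
      Finset.sum_le_sum (fun g hg => (hper g hg).1)
    rw [Finset.sum_const, smul_eq_mul, mul_one, hGfcard] at h1
    omega
  have hmle : m ≤ tk L 2 := by
    rcases le_or_gt m n with hcase | hcase
    · omega
    · have h1 : ∑ g ∈ Gf, (m + 1) ≤ ∑ g ∈ Gf, ((Dgf g).card + n) :=
        Finset.sum_le_sum (fun g hg => (hper g hg).2)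
      rw [Finset.sum_const, smul_eq_mul, Finset.sum_add_distrib, Finset.sum_const,
        smul_eq_mul, hGfcard] at h1
      -- n * (m + 1) ≤ S + n * n, S ≤ t2, n < m, 1 ≤ n ⟹ m ≤ t2
      nlinarith [hUle, hn1, hcase, h1]
  constructor
  · have hLm : L.ncard - m = n := by omega
    rw [hLm]
    exact max_le hnle hmle
  · omega
end

section
/- If two distinct lines of a supersolvable arrangement, neither passing through a given modular point p, meet at a crossing point of multiplicity 2, then a contradiction follows; hence the crossing points of multiplicity 2 on the lines not through p are pairwise distinct (each lies on exactly one line avoiding p). -/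
open Projectivization

/-- two distinct lines of the arrangement avoiding a modular point
p cannot meet at a crossing point of multiplicity 2; hence the double points on
the lines missing p are pairwise distinct. -/
theorem double_points_distinct {K : Type*} [Field K] (L : Set (PP K))
    (p : PP K) (hp : modular L p) (l₁ l₂ : PP K)
    (hl₁ : l₁ ∈ L) (hl₂ : l₂ ∈ L) (hne : l₁ ≠ l₂)
    (hpl₁ : ¬ incid p l₁) (hpl₂ : ¬ incid p l₂)
    (q : PP K) (hq₁ : incid q l₁) (hq₂ : incid q l₂) (hq : mult L q = 2) :
    False := by
  have hqp : q ≠ p := by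
    rintro rfl; exact hpl₁ hq₁
  obtain ⟨l, hl, hpl, hql⟩ := hp.2 q (by rw [crossing, hq]) hqp
  have hne1 : l ≠ l₁ := fun h => hpl₁ (h ▸ hpl)
  have hne2 : l ≠ l₂ := fun h => hpl₂ (h ▸ hpl)
  have hsub : ({l, l₁, l₂} : Set (PP K)) ⊆ {m ∈ L | incid q m} := by
    rintro m (rfl | rfl | rfl) <;> exact ⟨by assumption, by assumption⟩
  have hfin : {m ∈ L | incid q m}.Finite := by
    by_contra h
    rw [mult, Set.Infinite.ncard h] at hq
    exact two_ne_zero hq.symm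
  have h3 : ({l, l₁, l₂} : Set (PP K)).ncard = 3 := by
    rw [Set.ncard_insert_of_notMem (by simp [hne1, hne2]),
      Set.ncard_insert_of_notMem (by simp [hne]), Set.ncard_singleton]
  have := Set.ncard_le_ncard hsub hfin
  rw [h3] at this
  rw [mult] at hq
  omega
end
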